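/- arXiv:2011.07677 — 3 statements merged into one kernel-verified Lean document; each statement's English description precedes it below -/
import Mathlib

section
/- Under the two-stage randomized design with J_a ≥ 2 for all mechanisms a, the block-diagonal covariance estimator D̂ is conservative in expectation: the 2m × 2m matrix E[D̂] − D is positive semidefinite, where D = J · cov(Ŷ). -/
/-!
Two-stage randomized experiments (Jiang & Imai).
STATEMENT 0: Unbiasedness of Ŷ(z,a): E[Ŷ(z,a)] = Ȳ(z,a).
-/

open scoped BigOperators

noncomputable section

/-- A two-stage randomized design: `J` clusters, the `j`-th of size `n j`,
`m` treatment assignment mechanisms, `Jc a` clusters assigned to mechanism `a`,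
`n1 j a` treated units in cluster `j` under mechanism `a`, and fixed potential
outcomes `Y j i z a` (with `z : Bool`, `true` = treatment). -/
structure TwoStageDesign where
  J : ℕ
  m : ℕ
  n : Fin J → ℕ
  Jc : Fin m → ℕ
  n1 : Fin J → Fin m → ℕ
  Y : (j : Fin J) → Fin (n j) → Bool → Fin m → ℝ

namespace TwoStageDesign

variable (d : TwoStageDesign)

/-- The number of units in cluster `j` assigned to condition `z` under mechanism `a`. -/
def nz (z : Bool) (j : Fin d.J) (a : Fin d.m) : ℕ :=
  if z then d.n1 j a else d.n j - d.n1 j a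

/-- Admissible first-stage assignments: mechanism `a` is given to exactly `Jc a` clusters. -/
def mechA : Finset (Fin d.J → Fin d.m) :=
  Finset.univ.filter fun A => ∀ a, (Finset.univ.filter fun j => A j = a).card = d.Jc a

/-- Admissible second-stage assignments given the first stage `A`: the treated set in
cluster `j` has exactly `n1 j (A j)` units. -/
def treatA (A : Fin d.J → Fin d.m) : Finset ((j : Fin d.J) → Finset (Fin (d.n j))) :=
  Finset.univ.filter fun S => ∀ j, (S j).card = d.n1 j (A j)

/-- Expectation with respect to the two-stage randomization: `A` is uniform on the
admissible first-stage assignments and, given `A`, the treated sets are uniform on the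
admissible second-stage assignments (independently across clusters). -/
def expec (f : (Fin d.J → Fin d.m) → ((j : Fin d.J) → Finset (Fin (d.n j))) → ℝ) : ℝ :=
  ∑ A ∈ d.mechA, ∑ S ∈ d.treatA A,
    f A S / ((d.mechA.card : ℝ) * ((d.treatA A).card : ℝ))

/-- Covariance under the two-stage randomization. -/
def cov (f g : (Fin d.J → Fin d.m) → ((j : Fin d.J) → Finset (Fin (d.n j))) → ℝ) : ℝ :=
  d.expec fun A S => (f A S - d.expec f) * (g A S - d.expec g)

/-- Variance under the two-stage randomization. -/
def var (f : (Fin d.J → Fin d.m) → ((j : Fin d.J) → Finset (Fin (d.n j))) → ℝ) : ℝ :=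
  d.cov f f

/-- Observed outcome of unit `i` in cluster `j`: `Y_{ij} = Y_{ij}(Z_{ij}, A_j)`. -/
def Yobs (A : Fin d.J → Fin d.m) (S : (j : Fin d.J) → Finset (Fin (d.n j)))
    (j : Fin d.J) (i : Fin (d.n j)) : ℝ :=
  d.Y j i (decide (i ∈ S j)) (A j)

/-- `Ŷ_j(z)`: average observed outcome among units of cluster `j` with `Z_{ij} = z`. -/
def hatYj (A : Fin d.J → Fin d.m) (S : (j : Fin d.J) → Finset (Fin (d.n j)))
    (z : Bool) (j : Fin d.J) : ℝ :=
  (∑ i ∈ Finset.univ.filter (fun i => decide (i ∈ S j) = z), d.Yobs A S j i) /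
    ((Finset.univ.filter (fun i : Fin (d.n j) => decide (i ∈ S j) = z)).card : ℝ)

/-- `Ŷ(z,a)`: average of `Ŷ_j(z)` over clusters with `A_j = a`. -/
def hatY (A : Fin d.J → Fin d.m) (S : (j : Fin d.J) → Finset (Fin (d.n j)))
    (z : Bool) (a : Fin d.m) : ℝ :=
  (∑ j ∈ Finset.univ.filter (fun j => A j = a), d.hatYj A S z j) / (d.Jc a : ℝ)

/-- `Ȳ_j(z,a)`: cluster-level average potential outcome. -/
def Ybarj (j : Fin d.J) (z : Bool) (a : Fin d.m) : ℝ :=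
  (∑ i, d.Y j i z a) / (d.n j : ℝ)

/-- `Ȳ(z,a)`: population-level average potential outcome. -/
def Ybar (z : Bool) (a : Fin d.m) : ℝ :=
  (∑ j, d.Ybarj j z a) / (d.J : ℝ)

/-- `σ_j²(z,z';a,a')`: within-cluster covariance of the potential outcomes. -/
def sigU (j : Fin d.J) (z z' : Bool) (a a' : Fin d.m) : ℝ :=
  (∑ i, (d.Y j i z a - d.Ybarj j z a) * (d.Y j i z' a' - d.Ybarj j z' a')) /
    ((d.n j : ℝ) - 1)

/-- `σ_b²(z,z';a,a')`: between-cluster covariance of the cluster averages. -/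
def sigB (z z' : Bool) (a a' : Fin d.m) : ℝ :=
  (∑ j, (d.Ybarj j z a - d.Ybar z a) * (d.Ybarj j z' a' - d.Ybar z' a')) /
    ((d.J : ℝ) - 1)

/-- `σ̂_b²(z,z';a)`: between-cluster sample covariance among clusters with `A_j = a`. -/
def sigBhat (A : Fin d.J → Fin d.m) (S : (j : Fin d.J) → Finset (Fin (d.n j)))
    (z z' : Bool) (a : Fin d.m) : ℝ :=
  (∑ j ∈ Finset.univ.filter (fun j => A j = a),
      (d.hatYj A S z j - d.hatY A S z a) * (d.hatYj A S z' j - d.hatY A S z' a)) /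
    ((d.Jc a : ℝ) - 1)

end TwoStageDesign

namespace TSDAux
open Finset

lemma card_filter_equiv {α : Type*} [DecidableEq α] (s : Finset α) (Φ : α ≃ α)
    (hs : ∀ x, Φ x ∈ s ↔ x ∈ s) (p q : α → Prop) [DecidablePred p] [DecidablePred q]
    (hpq : ∀ x, q (Φ x) ↔ p x) : (s.filter p).card = (s.filter q).card := by
  have himg : s.filter q = (s.filter p).image Φ := by
    ext t
    simp only [Finset.mem_image, Finset.mem_filter]
    constructor
    · rintro ⟨ht, hq⟩
      refine ⟨Φ.symm t, ⟨?_, ?_⟩, by simp⟩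
      · rw [← hs (Φ.symm t)]; simpa using ht
      · rw [← hpq (Φ.symm t)]; simpa using hq
    · rintro ⟨x, ⟨hx, hp⟩, rfl⟩
      exact ⟨(hs x).mpr hx, (hpq x).mpr hp⟩
  rw [himg, Finset.card_image_of_injective _ Φ.injective]

lemma exists_perm_pair {ι : Type*} [DecidableEq ι] {j k j' k' : ι}
    (h : j ≠ k) (h' : j' ≠ k') : ∃ σ : Equiv.Perm ι, σ j = j' ∧ σ k = k' := by
  have h1 : Equiv.swap j j' k ≠ j' := by
    intro hc
    exact h.symm ((Equiv.swap j j').injective (hc.trans (Equiv.swap_apply_left j j').symm))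
  refine ⟨(Equiv.swap j j').trans (Equiv.swap (Equiv.swap j j' k) k'), ?_, ?_⟩
  · simp only [Equiv.trans_apply, Equiv.swap_apply_left]
    exact Equiv.swap_apply_of_ne_of_ne h1.symm h'
  · simp [Equiv.trans_apply, Equiv.swap_apply_left]

/-- precomposition by a permutation, as an equiv on functions -/
def precompEquiv {ι κ : Type*} (σ : Equiv.Perm ι) : (ι → κ) ≃ (ι → κ) where
  toFun A := A ∘ σ
  invFun A := A ∘ σ.symm
  left_inv A := by funext x; simp
  right_inv A := by funext x; simp

@[simp] lemma precompEquiv_apply {ι κ : Type*} (σ : Equiv.Perm ι) (A : ι → κ) (x : ι) :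
    precompEquiv σ A x = A (σ x) := rfl

lemma sum_ite_eq_add {n : ℕ} (v : Fin n → ℝ) (x : ℝ) (j : Fin n) :
    (∑ k, if j = k then x else v k) = (∑ k, v k) - v j + x := by
  have h : ∀ k, (if j = k then x else v k) = v k + (if j = k then x - v k else 0) := by
    intro k; split
    · next h => subst h; ring
    · ring
  simp only [h, Finset.sum_add_distrib, Finset.sum_ite_eq, Finset.mem_univ, if_true]
  ring

lemma ite_one_mul (c : Prop) [Decidable c] (x : ℝ) :
    (if c then (1:ℝ) else 0) * x = (if c then x else 0) := by split <;> simp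

lemma ite_mul_ite (c1 c2 : Prop) [Decidable c1] [Decidable c2] (x y : ℝ) :
    (if c1 then x else 0) * (if c2 then y else 0) = (if c1 ∧ c2 then x * y else 0) := by
  by_cases h1 : c1 <;> by_cases h2 : c2 <;> simp [h1, h2]

end TSDAux

namespace TwoStageDesign
open Finset

variable (d : TwoStageDesign)

/-- local (per-cluster) version of `hatYj`, as a function of the treated set only. -/
def gl (j : Fin d.J) (z : Bool) (a : Fin d.m) (s : Finset (Fin (d.n j))) : ℝ :=
  (∑ i ∈ Finset.univ.filter (fun i => decide (i ∈ s) = z), d.Y j i z a) /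
    ((Finset.univ.filter (fun i : Fin (d.n j) => decide (i ∈ s) = z)).card : ℝ)

/-- admissible treated sets in cluster `j` under mechanism `a` -/
def Psub (j : Fin d.J) (a : Fin d.m) : Finset (Finset (Fin (d.n j))) :=
  Finset.univ.powersetCard (d.n1 j a)

/-- second-stage mean of `Ŷ_j(z)` under mechanism `a` -/
def eM (j : Fin d.J) (z : Bool) (a : Fin d.m) : ℝ :=
  (∑ s ∈ d.Psub j a, d.gl j z a s) / ((d.Psub j a).card : ℝ)

/-- second-stage mean of `Ŷ_j(z)·Ŷ_j(z')` under mechanism `a` -/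
def wM (j : Fin d.J) (z z' : Bool) (a : Fin d.m) : ℝ :=
  (∑ s ∈ d.Psub j a, d.gl j z a s * d.gl j z' a s) / ((d.Psub j a).card : ℝ)

lemma hatYj_eq (A : Fin d.J → Fin d.m) (S : (j : Fin d.J) → Finset (Fin (d.n j)))
    (z : Bool) (j : Fin d.J) : d.hatYj A S z j = d.gl j z (A j) (S j) := by
  unfold hatYj gl Yobs
  congr 1
  refine Finset.sum_congr rfl fun i hi => ?_
  rw [(Finset.mem_filter.mp hi).2]

lemma hatY_eq (A : Fin d.J → Fin d.m) (S : (j : Fin d.J) → Finset (Fin (d.n j)))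
    (z : Bool) (a : Fin d.m) :
    d.hatY A S z a = (∑ j, if A j = a then d.gl j z a (S j) else 0) / (d.Jc a : ℝ) := by
  unfold hatY
  rw [Finset.sum_filter]
  congr 1
  refine Finset.sum_congr rfl fun j _ => ?_
  by_cases h : A j = a
  · rw [if_pos h, if_pos h, d.hatYj_eq, h]
  · rw [if_neg h, if_neg h]

lemma treatA_eq (A : Fin d.J → Fin d.m) :
    d.treatA A = Fintype.piFinset fun j => d.Psub j (A j) := by
  ext S
  simp [treatA, Psub, Fintype.mem_piFinset, Finset.mem_powersetCard, Finset.subset_univ]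

lemma Psub_card (j : Fin d.J) (a : Fin d.m) :
    (d.Psub j a).card = (d.n j).choose (d.n1 j a) := by
  simp [Psub, Finset.card_powersetCard]

lemma Psub_card_ne (hn1 : ∀ j a, d.n1 j a ≤ d.n j) (j : Fin d.J) (a : Fin d.m) :
    ((d.Psub j a).card : ℝ) ≠ 0 := by
  rw [d.Psub_card]
  exact_mod_cast (Nat.choose_pos (hn1 j a)).ne'

lemma treatA_card_ne (hn1 : ∀ j a, d.n1 j a ≤ d.n j) (A : Fin d.J → Fin d.m) :
    (((d.treatA A).card : ℝ)) ≠ 0 := by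
  rw [d.treatA_eq, Fintype.card_piFinset]
  push_cast
  exact Finset.prod_ne_zero_iff.mpr fun j _ => d.Psub_card_ne hn1 j (A j)

/-- conditional (second-stage) expectation given first-stage assignment `A` -/
def E2 (A : Fin d.J → Fin d.m) (f : ((j : Fin d.J) → Finset (Fin (d.n j))) → ℝ) : ℝ :=
  (∑ S ∈ d.treatA A, f S) / ((d.treatA A).card : ℝ)

lemma expec_eq_E2 (f : (Fin d.J → Fin d.m) → ((j : Fin d.J) → Finset (Fin (d.n j))) → ℝ) :
    d.expec f = (∑ A ∈ d.mechA, d.E2 A (f A)) / (d.mechA.card : ℝ) := by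
  unfold expec E2
  rw [Finset.sum_div]
  refine Finset.sum_congr rfl fun A _ => ?_
  rw [Finset.sum_div, Finset.sum_div]
  refine Finset.sum_congr rfl fun S _ => ?_
  rw [div_div, mul_comm ((d.treatA A).card : ℝ)]

lemma expec_congr {f g : (Fin d.J → Fin d.m) → ((j : Fin d.J) → Finset (Fin (d.n j))) → ℝ}
    (h : ∀ A ∈ d.mechA, ∀ S, f A S = g A S) : d.expec f = d.expec g := by
  unfold expec
  exact Finset.sum_congr rfl fun A hA => Finset.sum_congr rfl fun S _ => by rw [h A hA S]

lemma expec_add (f g : (Fin d.J → Fin d.m) → ((j : Fin d.J) → Finset (Fin (d.n j))) → ℝ) :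
    d.expec (fun A S => f A S + g A S) = d.expec f + d.expec g := by
  unfold expec
  rw [← Finset.sum_add_distrib]
  refine Finset.sum_congr rfl fun A _ => ?_
  rw [← Finset.sum_add_distrib]
  exact Finset.sum_congr rfl fun S _ => by rw [add_div]

lemma expec_smul (c : ℝ) (f : (Fin d.J → Fin d.m) → ((j : Fin d.J) → Finset (Fin (d.n j))) → ℝ) :
    d.expec (fun A S => c * f A S) = c * d.expec f := by
  unfold expec
  rw [Finset.mul_sum]
  refine Finset.sum_congr rfl fun A _ => ?_
  rw [Finset.mul_sum]
  exact Finset.sum_congr rfl fun S _ => by rw [mul_div_assoc]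

lemma expec_div (c : ℝ) (f : (Fin d.J → Fin d.m) → ((j : Fin d.J) → Finset (Fin (d.n j))) → ℝ) :
    d.expec (fun A S => f A S / c) = d.expec f / c := by
  have h : ∀ (A : Fin d.J → Fin d.m) S, f A S / c = c⁻¹ * f A S := fun A S => by
    rw [div_eq_mul_inv, mul_comm]
  calc d.expec (fun A S => f A S / c) = d.expec (fun A S => c⁻¹ * f A S) := by
        exact d.expec_congr fun A _ S => h A S
    _ = c⁻¹ * d.expec f := d.expec_smul _ _
    _ = d.expec f / c := by rw [div_eq_mul_inv, mul_comm]

lemma expec_zero : d.expec (fun _ _ => (0:ℝ)) = 0 := by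
  simp [expec]

lemma expec_sum {ι : Type*} (t : Finset ι)
    (F : ι → (Fin d.J → Fin d.m) → ((j : Fin d.J) → Finset (Fin (d.n j))) → ℝ) :
    d.expec (fun A S => ∑ x ∈ t, F x A S) = ∑ x ∈ t, d.expec (F x) := by
  unfold expec
  rw [Finset.sum_comm]
  refine Finset.sum_congr rfl fun A _ => ?_
  rw [Finset.sum_comm]
  refine Finset.sum_congr rfl fun S _ => ?_
  rw [Finset.sum_div]

lemma expec_const (hN : (d.mechA.card : ℝ) ≠ 0)
    (hc : ∀ A, ((d.treatA A).card : ℝ) ≠ 0) (c : ℝ) :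
    d.expec (fun _ _ => c) = c := by
  rw [d.expec_eq_E2]
  have h : ∀ A, d.E2 A (fun _ => c) = c := by
    intro A
    unfold E2
    rw [Finset.sum_const, nsmul_eq_mul, mul_comm, mul_div_assoc, div_self (hc A), mul_one]
  simp only [h, Finset.sum_const, nsmul_eq_mul]
  rw [mul_comm, mul_div_assoc, div_self hN, mul_one]

lemma cov_eq (hN : (d.mechA.card : ℝ) ≠ 0) (hc : ∀ A, ((d.treatA A).card : ℝ) ≠ 0)
    (f g : (Fin d.J → Fin d.m) → ((j : Fin d.J) → Finset (Fin (d.n j))) → ℝ) :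
    d.cov f g = d.expec (fun A S => f A S * g A S) - d.expec f * d.expec g := by
  unfold cov
  have h : ∀ (A : Fin d.J → Fin d.m) S,
      (f A S - d.expec f) * (g A S - d.expec g)
        = f A S * g A S + ((-(d.expec g)) * f A S
            + ((-(d.expec f)) * g A S + d.expec f * d.expec g)) := fun A S => by ring
  rw [d.expec_congr fun A _ S => h A S, d.expec_add, d.expec_add, d.expec_add,
    d.expec_smul, d.expec_smul, d.expec_const hN hc]
  ring

end TwoStageDesign

namespace TwoStageDesign
open Finset TSDAux

variable (d : TwoStageDesign)

lemma mem_mechA_iff (A : Fin d.J → Fin d.m) :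
    A ∈ d.mechA ↔ ∀ a, (Finset.univ.filter fun j => A j = a).card = d.Jc a := by
  simp [mechA]

lemma mechA_comp_perm (σ : Equiv.Perm (Fin d.J)) (A : Fin d.J → Fin d.m) :
    precompEquiv σ A ∈ d.mechA ↔ A ∈ d.mechA := by
  rw [d.mem_mechA_iff, d.mem_mechA_iff]
  have key : ∀ a : Fin d.m, (Finset.univ.filter fun x => A (σ x) = a).card
      = (Finset.univ.filter fun x => A x = a).card := fun a =>
    card_filter_equiv Finset.univ σ (by simp) _ _ (fun x => Iff.rfl)
  constructor <;> intro h a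
  · rw [← key a]; exact h a
  · rw [show (Finset.univ.filter fun j => precompEquiv σ A j = a)
        = (Finset.univ.filter fun x => A (σ x) = a) from rfl, key a]; exact h a

lemma R1 (j : Fin d.J) (a : Fin d.m) :
    (∑ A ∈ d.mechA, if A j = a then (1:ℝ) else 0) * (d.J : ℝ)
      = (d.mechA.card : ℝ) * (d.Jc a : ℝ) := by
  have const : ∀ j' : Fin d.J, (∑ A ∈ d.mechA, if A j' = a then (1:ℝ) else 0)
      = ∑ A ∈ d.mechA, if A j = a then (1:ℝ) else 0 := by
    intro j'
    rw [Finset.sum_boole, Finset.sum_boole]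
    congr 1
    refine card_filter_equiv d.mechA (precompEquiv (Equiv.swap j j'))
      (fun A => d.mechA_comp_perm _ A) _ _ (fun A => ?_)
    simp [Equiv.swap_apply_left]
  have tot : ∑ j' : Fin d.J, (∑ A ∈ d.mechA, if A j' = a then (1:ℝ) else 0)
      = (d.mechA.card : ℝ) * (d.Jc a : ℝ) := by
    rw [Finset.sum_comm]
    have inner : ∀ A ∈ d.mechA, (∑ j' : Fin d.J, if A j' = a then (1:ℝ) else 0)
        = (d.Jc a : ℝ) := by
      intro A hA
      rw [Finset.sum_boole, (d.mem_mechA_iff A).mp hA a]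
    rw [Finset.sum_congr rfl inner, Finset.sum_const, nsmul_eq_mul]
  rw [← tot, Finset.sum_congr rfl (fun j' _ => const j'), Finset.sum_const,
    Finset.card_univ, Fintype.card_fin, nsmul_eq_mul, mul_comm]

lemma R2 {j k : Fin d.J} (hjk : j ≠ k) (a b : Fin d.m) :
    (∑ A ∈ d.mechA, if A j = a ∧ A k = b then (1:ℝ) else 0) * ((d.J:ℝ) * ((d.J:ℝ) - 1))
      = (d.mechA.card : ℝ)
          * ((d.Jc a : ℝ) * (d.Jc b : ℝ) - if a = b then (d.Jc a : ℝ) else 0) := by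
  have const : ∀ j' k' : Fin d.J, j' ≠ k' →
      (∑ A ∈ d.mechA, if A j' = a ∧ A k' = b then (1:ℝ) else 0)
        = ∑ A ∈ d.mechA, if A j = a ∧ A k = b then (1:ℝ) else 0 := by
    intro j' k' hj'k'
    obtain ⟨σ, hσj, hσk⟩ := exists_perm_pair hjk hj'k'
    rw [Finset.sum_boole, Finset.sum_boole]
    congr 1
    refine card_filter_equiv d.mechA (precompEquiv σ)
      (fun A => d.mechA_comp_perm _ A) _ _ (fun A => ?_)
    simp [hσj, hσk]
  have inner : ∀ A ∈ d.mechA,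
      (∑ j' : Fin d.J, ∑ k' : Fin d.J, if j' ≠ k' ∧ A j' = a ∧ A k' = b then (1:ℝ) else 0)
        = (d.Jc a : ℝ) * (d.Jc b : ℝ) - (if a = b then (d.Jc a : ℝ) else 0) := by
    intro A hA
    have split : ∀ j' k' : Fin d.J,
        (if j' ≠ k' ∧ A j' = a ∧ A k' = b then (1:ℝ) else 0)
          = (if A j' = a then (1:ℝ) else 0) * (if A k' = b then (1:ℝ) else 0)
            - (if j' = k' then (if A j' = a ∧ A j' = b then (1:ℝ) else 0) else 0) := by
      intro j' k'
      by_cases h1 : j' = k'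
      · subst h1
        by_cases h2 : A j' = a <;> by_cases h3 : A j' = b <;> simp [h2, h3]
      · by_cases h2 : A j' = a <;> by_cases h3 : A k' = b <;> simp [h1, h2, h3]
    simp only [split, Finset.sum_sub_distrib]
    congr 1
    · rw [← Finset.sum_mul_sum, Finset.sum_boole, Finset.sum_boole,
        (d.mem_mechA_iff A).mp hA a, (d.mem_mechA_iff A).mp hA b]
    · have hcollapse : ∀ j' : Fin d.J,
          (∑ k' : Fin d.J, if j' = k' then (if A j' = a ∧ A j' = b then (1:ℝ) else 0) else 0)
            = (if A j' = a ∧ A j' = b then (1:ℝ) else 0) := fun j' => by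
        rw [Finset.sum_ite_eq, if_pos (Finset.mem_univ j')]
      simp only [hcollapse]
      by_cases hab : a = b
      · subst hab
        simp only [and_self, eq_self_iff_true, if_true]
        rw [Finset.sum_boole, (d.mem_mechA_iff A).mp hA a]
      · rw [if_neg hab]
        refine Finset.sum_eq_zero fun j' _ => ?_
        rw [if_neg]
        rintro ⟨h1, h2⟩
        exact hab (h1 ▸ h2 ▸ rfl)
  -- count lemma: number of ordered distinct pairs
  have cnt : (∑ j' : Fin d.J, ∑ k' : Fin d.J, if j' ≠ k' then (1:ℝ) else 0)
      = (d.J:ℝ) * ((d.J:ℝ) - 1) := by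
    have hinner : ∀ j' : Fin d.J, (∑ k' : Fin d.J, if j' ≠ k' then (1:ℝ) else 0)
        = (d.J:ℝ) - 1 := by
      intro j'
      have : ∀ k' : Fin d.J, (if j' ≠ k' then (1:ℝ) else 0)
          = 1 - (if j' = k' then (1:ℝ) else 0) := by
        intro k'; by_cases h : j' = k' <;> simp [h]
      simp only [this, Finset.sum_sub_distrib, Finset.sum_const, Finset.card_univ,
        Fintype.card_fin, nsmul_eq_mul, mul_one, Finset.sum_ite_eq, Finset.mem_univ, if_true]
    simp only [hinner, Finset.sum_const, Finset.card_univ, Fintype.card_fin, nsmul_eq_mul]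
  -- combine
  have tot : (∑ j' : Fin d.J, ∑ k' : Fin d.J, if j' ≠ k'
        then (∑ A ∈ d.mechA, if A j' = a ∧ A k' = b then (1:ℝ) else 0) else 0)
      = (d.mechA.card : ℝ)
          * ((d.Jc a : ℝ) * (d.Jc b : ℝ) - if a = b then (d.Jc a : ℝ) else 0) := by
    have swap1 : ∀ j' k' : Fin d.J, (if j' ≠ k'
          then (∑ A ∈ d.mechA, if A j' = a ∧ A k' = b then (1:ℝ) else 0) else 0)
        = ∑ A ∈ d.mechA, if j' ≠ k' ∧ A j' = a ∧ A k' = b then (1:ℝ) else 0 := by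
      intro j' k'
      by_cases h : j' = k'
      · simp [h]
      · simp only [if_pos h, Ne, h, not_false_iff]
        refine Finset.sum_congr rfl fun A _ => ?_
        simp [h]
    simp only [swap1]
    rw [Finset.sum_congr rfl fun (j' : Fin d.J) _ => Finset.sum_comm, Finset.sum_comm]
    rw [Finset.sum_congr rfl inner, Finset.sum_const, nsmul_eq_mul]
  have pull : ∀ j' k' : Fin d.J, (if j' ≠ k'
        then (∑ A ∈ d.mechA, if A j' = a ∧ A k' = b then (1:ℝ) else 0) else 0)
      = (if j' ≠ k' then (1:ℝ) else 0)
          * (∑ A ∈ d.mechA, if A j = a ∧ A k = b then (1:ℝ) else 0) := by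
    intro j' k'
    by_cases h : j' ≠ k'
    · rw [if_pos h, if_pos h, one_mul, const j' k' h]
    · rw [if_neg h, if_neg h, zero_mul]
  rw [Finset.sum_congr rfl fun (j' : Fin d.J) _ =>
      Finset.sum_congr rfl fun (k' : Fin d.J) _ => pull j' k'] at tot
  simp only [← Finset.sum_mul] at tot
  rw [cnt] at tot
  rw [mul_comm] at tot
  exact tot

end TwoStageDesign

namespace TSDAux

/-- the fiber of a sigma type over a point, as an equiv -/
def sigmaFiber {m : ℕ} (Jc : Fin m → ℕ) (a : Fin m) :
    {p : Σ a', Fin (Jc a') // p.1 = a} ≃ Fin (Jc a) where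
  toFun p := p.1.2.cast (congrArg Jc p.2)
  invFun b := ⟨⟨a, b⟩, rfl⟩
  left_inv := by rintro ⟨⟨a', b⟩, rfl⟩; rfl
  right_inv b := rfl

end TSDAux

namespace TwoStageDesign
open Finset TSDAux

variable (d : TwoStageDesign)

lemma mechA_nonempty (hJsum : ∑ a, d.Jc a = d.J) : d.mechA.Nonempty := by
  have hcard : Fintype.card (Σ a : Fin d.m, Fin (d.Jc a)) = Fintype.card (Fin d.J) := by
    simp [Fintype.card_sigma, hJsum]
  let eqv : Fin d.J ≃ Σ a : Fin d.m, Fin (d.Jc a) := (Fintype.equivOfCardEq hcard).symm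
  refine ⟨fun j => (eqv j).1, ?_⟩
  rw [d.mem_mechA_iff]
  intro a
  rw [← Fintype.card_subtype]
  rw [Fintype.card_congr ((Equiv.subtypeEquiv eqv (fun j => Iff.rfl)).trans
    (sigmaFiber d.Jc a))]
  exact Fintype.card_fin _

lemma mechA_card_ne (hJsum : ∑ a, d.Jc a = d.J) : (d.mechA.card : ℝ) ≠ 0 := by
  exact_mod_cast (Finset.card_pos.mpr (d.mechA_nonempty hJsum)).ne'

/-- second-stage expectation of a function of a single cluster -/
lemma E2_single (hn1 : ∀ j a, d.n1 j a ≤ d.n j) (A : Fin d.J → Fin d.m) (j : Fin d.J)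
    (φ : Finset (Fin (d.n j)) → ℝ) :
    d.E2 A (fun S => φ (S j))
      = (∑ s ∈ d.Psub j (A j), φ s) / ((d.Psub j (A j)).card : ℝ) := by
  classical
  set H : (j' : Fin d.J) → Finset (Fin (d.n j')) → ℝ :=
    fun j' s => if h : j' = j then φ (h ▸ s) else 1 with hH
  have hprod : ∀ S : (j' : Fin d.J) → Finset (Fin (d.n j')),
      φ (S j) = ∏ j', H j' (S j') := by
    intro S
    rw [Finset.prod_eq_single_of_mem j (Finset.mem_univ j)
      (fun b _ hb => by simp [hH, dif_neg hb])]
    simp [hH]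
  have hcard : ∀ j' a', ((d.Psub j' a').card : ℝ) ≠ 0 := fun j' a' => d.Psub_card_ne hn1 j' a'
  unfold E2
  rw [d.treatA_eq]
  simp only [hprod]
  rw [← Finset.prod_univ_sum, Fintype.card_piFinset]
  push_cast
  rw [← Finset.prod_div_distrib]
  rw [Finset.prod_eq_single_of_mem j (Finset.mem_univ j) (fun b _ hb => ?_)]
  · congr 1
    refine Finset.sum_congr rfl fun s _ => ?_
    simp [hH]
  · have : ∀ s ∈ d.Psub b (A b), H b s = 1 := fun s _ => by simp [hH, dif_neg hb]
    rw [Finset.sum_congr rfl this, Finset.sum_const, nsmul_eq_mul, mul_one,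
      div_self (hcard b (A b))]

/-- second-stage expectation of a product over two distinct clusters -/
lemma E2_pair (hn1 : ∀ j a, d.n1 j a ≤ d.n j) (A : Fin d.J → Fin d.m) {j k : Fin d.J}
    (hjk : j ≠ k) (φ : Finset (Fin (d.n j)) → ℝ) (ψ : Finset (Fin (d.n k)) → ℝ) :
    d.E2 A (fun S => φ (S j) * ψ (S k))
      = ((∑ s ∈ d.Psub j (A j), φ s) / ((d.Psub j (A j)).card : ℝ))
        * ((∑ s ∈ d.Psub k (A k), ψ s) / ((d.Psub k (A k)).card : ℝ)) := by
  classical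
  set H : (j' : Fin d.J) → Finset (Fin (d.n j')) → ℝ :=
    fun j' s => if h : j' = j then φ (h ▸ s) else if h : j' = k then ψ (h ▸ s) else 1 with hH
  have hkmem : k ∈ (Finset.univ : Finset (Fin d.J)).erase j :=
    Finset.mem_erase.mpr ⟨fun h => hjk h.symm, Finset.mem_univ k⟩
  have prodDouble : ∀ F : Fin d.J → ℝ, (∀ j', j' ≠ j → j' ≠ k → F j' = 1) →
      ∏ j', F j' = F j * F k := by
    intro F hF
    rw [← Finset.mul_prod_erase univ F (Finset.mem_univ j),
      ← Finset.mul_prod_erase _ F hkmem,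
      Finset.prod_eq_one (fun j' hj' => hF j'
        (Finset.mem_erase.mp (Finset.mem_erase.mp hj').2).1 (Finset.mem_erase.mp hj').1),
      mul_one]
  have hprod : ∀ S : (j' : Fin d.J) → Finset (Fin (d.n j')),
      φ (S j) * ψ (S k) = ∏ j', H j' (S j') := by
    intro S
    rw [prodDouble (fun j' => H j' (S j'))
      (fun j' h1 h2 => by simp [hH, dif_neg h1, dif_neg h2])]
    simp [hH, Ne.symm hjk]
  have hcard : ∀ j' a', ((d.Psub j' a').card : ℝ) ≠ 0 := fun j' a' => d.Psub_card_ne hn1 j' a'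
  unfold E2
  rw [d.treatA_eq]
  simp only [hprod]
  rw [← Finset.prod_univ_sum, Fintype.card_piFinset]
  push_cast
  rw [← Finset.prod_div_distrib]
  rw [prodDouble (fun j' => (∑ s ∈ d.Psub j' (A j'), H j' s) / ((d.Psub j' (A j')).card : ℝ))
    (fun j' h1 h2 => ?_)]
  · congr 1
    · congr 1
      exact Finset.sum_congr rfl fun s _ => by simp [hH]
    · congr 1
      exact Finset.sum_congr rfl fun s _ => by simp [hH, Ne.symm hjk]
  · have h3 : ∀ s ∈ d.Psub j' (A j'), H j' s = 1 := fun s _ => by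
      simp [hH, dif_neg h1, dif_neg h2]
    show (∑ s ∈ d.Psub j' (A j'), H j' s) / ((d.Psub j' (A j')).card : ℝ) = 1
    rw [Finset.sum_congr rfl h3, Finset.sum_const, nsmul_eq_mul, mul_one,
      div_self (hcard j' (A j'))]

end TwoStageDesign

namespace TwoStageDesign
open Finset TSDAux

variable (d : TwoStageDesign)

lemma E2_of_zero (A : Fin d.J → Fin d.m) : d.E2 A (fun _ => (0:ℝ)) = 0 := by
  simp [E2]

lemma M1 (hn1 : ∀ j a, d.n1 j a ≤ d.n j) (hN : (d.mechA.card : ℝ) ≠ 0)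
    (hJ0 : (d.J : ℝ) ≠ 0) (j : Fin d.J) (a : Fin d.m) (z : Bool) :
    d.expec (fun A S => if A j = a then d.gl j z a (S j) else 0)
      = ((d.Jc a : ℝ) / (d.J : ℝ)) * d.eM j z a := by
  rw [d.expec_eq_E2]
  have hE2 : ∀ A, d.E2 A (fun S => if A j = a then d.gl j z a (S j) else 0)
      = if A j = a then d.eM j z a else 0 := by
    intro A
    by_cases h : A j = a
    · simp only [if_pos h]
      rw [d.E2_single hn1 A j (d.gl j z a), h]
      rfl
    · simp only [if_neg h]
      exact d.E2_of_zero A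
  simp only [hE2]
  rw [Finset.sum_congr rfl fun A _ => (ite_one_mul (A j = a) (d.eM j z a)).symm,
    ← Finset.sum_mul]
  have h1 := d.R1 j a
  rw [Finset.sum_boole] at h1 ⊢
  field_simp
  linear_combination d.eM j z a * h1

lemma M2 (hn1 : ∀ j a, d.n1 j a ≤ d.n j) (hN : (d.mechA.card : ℝ) ≠ 0)
    (hJ0 : (d.J : ℝ) ≠ 0) (j : Fin d.J) (a : Fin d.m) (z z' : Bool) :
    d.expec (fun A S => if A j = a then d.gl j z a (S j) * d.gl j z' a (S j) else 0)
      = ((d.Jc a : ℝ) / (d.J : ℝ)) * d.wM j z z' a := by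
  rw [d.expec_eq_E2]
  have hE2 : ∀ A, d.E2 A (fun S => if A j = a then d.gl j z a (S j) * d.gl j z' a (S j) else 0)
      = if A j = a then d.wM j z z' a else 0 := by
    intro A
    by_cases h : A j = a
    · simp only [if_pos h]
      rw [d.E2_single hn1 A j (fun s => d.gl j z a s * d.gl j z' a s), h]
      rfl
    · simp only [if_neg h]
      exact d.E2_of_zero A
  simp only [hE2]
  rw [Finset.sum_congr rfl fun A _ => (ite_one_mul (A j = a) (d.wM j z z' a)).symm,
    ← Finset.sum_mul]
  have h1 := d.R1 j a
  rw [Finset.sum_boole] at h1 ⊢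
  field_simp
  linear_combination d.wM j z z' a * h1

lemma M3 (hn1 : ∀ j a, d.n1 j a ≤ d.n j) (hN : (d.mechA.card : ℝ) ≠ 0)
    (hJ0 : (d.J : ℝ) ≠ 0) (hJ1 : (d.J : ℝ) - 1 ≠ 0) {j k : Fin d.J} (hjk : j ≠ k)
    (a b : Fin d.m) (z z' : Bool) :
    d.expec (fun A S => if A j = a ∧ A k = b
        then d.gl j z a (S j) * d.gl k z' b (S k) else 0)
      = (((d.Jc a : ℝ) * (d.Jc b : ℝ) - if a = b then (d.Jc a : ℝ) else 0)
          / ((d.J : ℝ) * ((d.J : ℝ) - 1))) * (d.eM j z a * d.eM k z' b) := by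
  rw [d.expec_eq_E2]
  have hE2 : ∀ A, d.E2 A (fun S => if A j = a ∧ A k = b
        then d.gl j z a (S j) * d.gl k z' b (S k) else 0)
      = if A j = a ∧ A k = b then d.eM j z a * d.eM k z' b else 0 := by
    intro A
    by_cases h : A j = a ∧ A k = b
    · simp only [if_pos h]
      rw [d.E2_pair hn1 A hjk (d.gl j z a) (d.gl k z' b), h.1, h.2]
      rfl
    · simp only [if_neg h]
      exact d.E2_of_zero A
  simp only [hE2]
  rw [Finset.sum_congr rfl fun A _ =>
      (ite_one_mul (A j = a ∧ A k = b) (d.eM j z a * d.eM k z' b)).symm,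
    ← Finset.sum_mul]
  have h1 := d.R2 hjk a b
  rw [Finset.sum_boole] at h1 ⊢
  generalize (if a = b then (d.Jc a : ℝ) else 0) = t at h1 ⊢
  field_simp
  linear_combination (d.eM j z a * d.eM k z' b) * h1

lemma EY (hn1 : ∀ j a, d.n1 j a ≤ d.n j) (hN : (d.mechA.card : ℝ) ≠ 0)
    (hJ0 : (d.J : ℝ) ≠ 0) (hJca : ∀ a, (d.Jc a : ℝ) ≠ 0) (z : Bool) (a : Fin d.m) :
    d.expec (fun A S => d.hatY A S z a) = (∑ j, d.eM j z a) / (d.J : ℝ) := by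
  have h : ∀ (A : Fin d.J → Fin d.m) S, d.hatY A S z a
      = (∑ j, if A j = a then d.gl j z a (S j) else 0) / (d.Jc a : ℝ) :=
    fun A S => d.hatY_eq A S z a
  rw [d.expec_congr fun A _ S => h A S, d.expec_div, d.expec_sum]
  rw [Finset.sum_congr rfl fun j _ => d.M1 hn1 hN hJ0 j a z, ← Finset.mul_sum]
  have hca := hJca a
  field_simp

end TwoStageDesign

namespace TwoStageDesign
open Finset TSDAux

variable (d : TwoStageDesign)

lemma double_sum_eval (u e f : Fin d.J → ℝ) (c : ℝ) :
    (∑ j, ∑ k, if j = k then u j else c * (e j * f k))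
      = (∑ j, u j) + c * ((∑ j, e j) * (∑ j, f j) - ∑ j, e j * f j) := by
  have h1 : ∀ j, (∑ k, if j = k then u j else c * (e j * f k))
      = (∑ k, c * (e j * f k)) - c * (e j * f j) + u j := fun j =>
    sum_ite_eq_add (fun k => c * (e j * f k)) (u j) j
  simp only [h1]
  rw [Finset.sum_add_distrib, Finset.sum_sub_distrib]
  have h2 : (∑ j, ∑ k, c * (e j * f k)) = c * ((∑ j, e j) * (∑ j, f j)) := by
    simp only [← Finset.mul_sum, ← Finset.sum_mul]
  have h3 : (∑ j, c * (e j * f j)) = c * (∑ j, e j * f j) := (Finset.mul_sum _ _ _).symm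
  rw [h2, h3]
  ring

lemma hatY_mul_pt (A : Fin d.J → Fin d.m) (S : (j : Fin d.J) → Finset (Fin (d.n j)))
    (z z' : Bool) (a b : Fin d.m) :
    d.hatY A S z a * d.hatY A S z' b
      = (∑ j, ∑ k, if A j = a ∧ A k = b
          then d.gl j z a (S j) * d.gl k z' b (S k) else 0)
        / ((d.Jc a : ℝ) * (d.Jc b : ℝ)) := by
  rw [d.hatY_eq A S z a, d.hatY_eq A S z' b, div_mul_div_comm, Finset.sum_mul_sum]
  congr 1
  exact Finset.sum_congr rfl fun j _ => Finset.sum_congr rfl fun k _ =>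
    ite_mul_ite (A j = a) (A k = b) _ _

/-- `E[Ŷ(z,a)·Ŷ(z',a)]`, same-mechanism case -/
lemma EYY_eq (hn1 : ∀ j a, d.n1 j a ≤ d.n j) (hN : (d.mechA.card : ℝ) ≠ 0)
    (hJ0 : (d.J : ℝ) ≠ 0) (hJ1 : (d.J : ℝ) - 1 ≠ 0) (z z' : Bool) (a : Fin d.m) :
    d.expec (fun A S => d.hatY A S z a * d.hatY A S z' a)
      = (((d.Jc a : ℝ) / (d.J : ℝ)) * (∑ j, d.wM j z z' a)
          + (((d.Jc a : ℝ) * (d.Jc a : ℝ) - (d.Jc a : ℝ)) / ((d.J : ℝ) * ((d.J : ℝ) - 1)))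
            * ((∑ j, d.eM j z a) * (∑ j, d.eM j z' a) - ∑ j, d.eM j z a * d.eM j z' a))
        / ((d.Jc a : ℝ) * (d.Jc a : ℝ)) := by
  rw [d.expec_congr fun A _ S => d.hatY_mul_pt A S z z' a a, d.expec_div, d.expec_sum]
  have hterm : ∀ j k : Fin d.J,
      d.expec (fun A S => if A j = a ∧ A k = a
          then d.gl j z a (S j) * d.gl k z' a (S k) else 0)
      = if j = k then ((d.Jc a : ℝ) / (d.J : ℝ)) * d.wM j z z' a
        else (((d.Jc a : ℝ) * (d.Jc a : ℝ) - (d.Jc a : ℝ)) / ((d.J : ℝ) * ((d.J : ℝ) - 1)))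
          * (d.eM j z a * d.eM k z' a) := by
    intro j k
    rcases eq_or_ne j k with rfl | hjk
    · have hpt : ∀ (A : Fin d.J → Fin d.m) (S : (j : Fin d.J) → Finset (Fin (d.n j))),
          (if A j = a ∧ A j = a then d.gl j z a (S j) * d.gl j z' a (S j) else 0)
            = (if A j = a then d.gl j z a (S j) * d.gl j z' a (S j) else 0) := by
        intro A S; simp only [and_self]
      rw [d.expec_congr fun A _ S => hpt A S, d.M2 hn1 hN hJ0 j a z z', if_pos rfl]
    · rw [d.M3 hn1 hN hJ0 hJ1 hjk a a z z', if_neg hjk]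
      simp
  rw [Finset.sum_congr rfl fun j _ => d.expec_sum Finset.univ _,
    Finset.sum_congr rfl fun j (_ : j ∈ Finset.univ) =>
      Finset.sum_congr rfl fun k _ => hterm j k,
    d.double_sum_eval]
  congr 2
  exact (Finset.mul_sum _ _ _).symm

/-- `E[Ŷ(z,a)·Ŷ(z',b)]`, distinct-mechanisms case -/
lemma EYY_ne (hn1 : ∀ j a, d.n1 j a ≤ d.n j) (hN : (d.mechA.card : ℝ) ≠ 0)
    (hJ0 : (d.J : ℝ) ≠ 0) (hJ1 : (d.J : ℝ) - 1 ≠ 0) (z z' : Bool) {a b : Fin d.m}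
    (hab : a ≠ b) :
    d.expec (fun A S => d.hatY A S z a * d.hatY A S z' b)
      = ((((d.Jc a : ℝ) * (d.Jc b : ℝ)) / ((d.J : ℝ) * ((d.J : ℝ) - 1)))
            * ((∑ j, d.eM j z a) * (∑ j, d.eM j z' b) - ∑ j, d.eM j z a * d.eM j z' b))
        / ((d.Jc a : ℝ) * (d.Jc b : ℝ)) := by
  rw [d.expec_congr fun A _ S => d.hatY_mul_pt A S z z' a b, d.expec_div, d.expec_sum]
  have hterm : ∀ j k : Fin d.J,
      d.expec (fun A S => if A j = a ∧ A k = b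
          then d.gl j z a (S j) * d.gl k z' b (S k) else 0)
      = if j = k then (0:ℝ)
        else (((d.Jc a : ℝ) * (d.Jc b : ℝ)) / ((d.J : ℝ) * ((d.J : ℝ) - 1)))
          * (d.eM j z a * d.eM k z' b) := by
    intro j k
    rcases eq_or_ne j k with rfl | hjk
    · have hpt : ∀ (A : Fin d.J → Fin d.m) (S : (j : Fin d.J) → Finset (Fin (d.n j))),
          (if A j = a ∧ A j = b then d.gl j z a (S j) * d.gl j z' b (S j) else 0)
            = (0:ℝ) := by
        intro A S
        rw [if_neg]
        rintro ⟨h1, h2⟩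
        exact hab (h1 ▸ h2 ▸ rfl)
      rw [d.expec_congr fun A _ S => hpt A S, d.expec_zero, if_pos rfl]
    · rw [d.M3 hn1 hN hJ0 hJ1 hjk a b z z', if_neg hjk, if_neg hab, sub_zero]
  rw [Finset.sum_congr rfl fun j _ => d.expec_sum Finset.univ _,
    Finset.sum_congr rfl fun j (_ : j ∈ Finset.univ) =>
      Finset.sum_congr rfl fun k _ => hterm j k,
    d.double_sum_eval]
  simp

lemma sigBhat_pt {a' : Fin d.m} (hJca : (d.Jc a' : ℝ) ≠ 0) {A : Fin d.J → Fin d.m}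
    (hA : A ∈ d.mechA) (S : (j : Fin d.J) → Finset (Fin (d.n j))) (z z' : Bool) :
    d.sigBhat A S z z' a'
      = ((∑ j, if A j = a' then d.gl j z a' (S j) * d.gl j z' a' (S j) else 0)
          - (d.Jc a' : ℝ) * (d.hatY A S z a' * d.hatY A S z' a'))
        / ((d.Jc a' : ℝ) - 1) := by
  unfold sigBhat
  congr 1
  have hcard : (((Finset.univ.filter fun j => A j = a').card : ℕ) : ℝ) = (d.Jc a' : ℝ) := by
    exact congrArg (fun x : ℕ => (x : ℝ)) ((d.mem_mechA_iff A).mp hA a')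
  have hX : d.hatY A S z a'
      = (∑ j ∈ Finset.univ.filter (fun j => A j = a'), d.hatYj A S z j) / (d.Jc a' : ℝ) := rfl
  have hY : d.hatY A S z' a'
      = (∑ j ∈ Finset.univ.filter (fun j => A j = a'), d.hatYj A S z' j) / (d.Jc a' : ℝ) := rfl
  have hsx : (∑ j ∈ Finset.univ.filter (fun j => A j = a'), d.hatYj A S z j)
      = (d.Jc a' : ℝ) * d.hatY A S z a' := by
    rw [hX, mul_div_cancel₀ _ hJca]
  have hsy : (∑ j ∈ Finset.univ.filter (fun j => A j = a'), d.hatYj A S z' j)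
      = (d.Jc a' : ℝ) * d.hatY A S z' a' := by
    rw [hY, mul_div_cancel₀ _ hJca]
  set X := d.hatY A S z a'
  set Y := d.hatY A S z' a'
  have expand : ∀ j, (d.hatYj A S z j - X) * (d.hatYj A S z' j - Y)
      = d.hatYj A S z j * d.hatYj A S z' j
        - (X * d.hatYj A S z' j + Y * d.hatYj A S z j - X * Y) := fun j => by ring
  have hmid : (∑ j ∈ Finset.univ.filter (fun j => A j = a'),
        (X * d.hatYj A S z' j + Y * d.hatYj A S z j - X * Y))
      = X * ((d.Jc a' : ℝ) * Y) + Y * ((d.Jc a' : ℝ) * X) - (d.Jc a' : ℝ) * (X * Y) := by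
    rw [Finset.sum_sub_distrib, Finset.sum_add_distrib, ← Finset.mul_sum, ← Finset.mul_sum,
      hsx, hsy, Finset.sum_const, nsmul_eq_mul, hcard]
  rw [Finset.sum_congr rfl fun j _ => expand j, Finset.sum_sub_distrib, hmid]
  have hfin : (∑ j ∈ Finset.univ.filter (fun j => A j = a'),
      d.hatYj A S z j * d.hatYj A S z' j)
      = ∑ j, if A j = a' then d.gl j z a' (S j) * d.gl j z' a' (S j) else 0 := by
    rw [Finset.sum_filter]
    refine Finset.sum_congr rfl fun j _ => ?_
    by_cases h : A j = a'
    · rw [if_pos h, if_pos h, d.hatYj_eq, d.hatYj_eq, h]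
    · rw [if_neg h, if_neg h]
  rw [hfin]
  ring

lemma Esig (hn1 : ∀ j a, d.n1 j a ≤ d.n j) (hN : (d.mechA.card : ℝ) ≠ 0)
    (hJ0 : (d.J : ℝ) ≠ 0) (z z' : Bool) (a : Fin d.m)
    (hJca : (d.Jc a : ℝ) ≠ 0) (hJca1 : (d.Jc a : ℝ) - 1 ≠ 0) :
    d.expec (fun A S => ((d.J : ℝ) / (d.Jc a : ℝ)) * d.sigBhat A S z z' a)
      = ((d.J : ℝ) / ((d.Jc a : ℝ) * ((d.Jc a : ℝ) - 1)))
          * (((d.Jc a : ℝ) / (d.J : ℝ)) * ∑ j, d.wM j z z' a)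
        - ((d.J : ℝ) / ((d.Jc a : ℝ) - 1))
          * d.expec (fun A S => d.hatY A S z a * d.hatY A S z' a) := by
  have hpt : ∀ A ∈ d.mechA, ∀ S,
      ((d.J : ℝ) / (d.Jc a : ℝ)) * d.sigBhat A S z z' a
        = ((d.J : ℝ) / ((d.Jc a : ℝ) * ((d.Jc a : ℝ) - 1)))
            * (∑ j, if A j = a then d.gl j z a (S j) * d.gl j z' a (S j) else 0)
          + (-((d.J : ℝ) / ((d.Jc a : ℝ) - 1)))
            * (d.hatY A S z a * d.hatY A S z' a) := by
    intro A hA S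
    rw [d.sigBhat_pt hJca hA S z z']
    field_simp
    ring
  rw [d.expec_congr hpt, d.expec_add, d.expec_smul, d.expec_smul, d.expec_sum,
    Finset.sum_congr rfl fun j (_ : j ∈ Finset.univ) => d.M2 hn1 hN hJ0 j a z z',
    ← Finset.mul_sum]
  ring

end TwoStageDesign

namespace TwoStageDesign
open Finset TSDAux

variable (d : TwoStageDesign)

lemma entry (hn1 : ∀ j a, d.n1 j a ≤ d.n j) (hN : (d.mechA.card : ℝ) ≠ 0)
    (hc : ∀ A, ((d.treatA A).card : ℝ) ≠ 0)
    (hJ0 : (d.J : ℝ) ≠ 0) (hJ1 : (d.J : ℝ) - 1 ≠ 0)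
    (hJca : ∀ a, (d.Jc a : ℝ) ≠ 0) (hJca1 : ∀ a, (d.Jc a : ℝ) - 1 ≠ 0)
    (a b : Fin d.m) (z z' : Bool) :
    (if a = b then d.expec (fun A S => ((d.J : ℝ) / (d.Jc a : ℝ)) * d.sigBhat A S z z' a)
        else 0)
      - (d.J : ℝ) * d.cov (fun A S => d.hatY A S z a) (fun A S => d.hatY A S z' b)
    = (∑ j, (d.eM j z a - (∑ i, d.eM i z a) / (d.J : ℝ))
          * (d.eM j z' b - (∑ i, d.eM i z' b) / (d.J : ℝ))) / ((d.J : ℝ) - 1) := by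
  have hRHS : (∑ j, (d.eM j z a - (∑ i, d.eM i z a) / (d.J : ℝ))
          * (d.eM j z' b - (∑ i, d.eM i z' b) / (d.J : ℝ)))
      = (∑ i, d.eM i z a * d.eM i z' b)
        - (∑ i, d.eM i z a) * (∑ i, d.eM i z' b) / (d.J : ℝ) := by
    have hexp : ∀ j, (d.eM j z a - (∑ i, d.eM i z a) / (d.J : ℝ))
          * (d.eM j z' b - (∑ i, d.eM i z' b) / (d.J : ℝ))
        = d.eM j z a * d.eM j z' b
          - (((∑ i, d.eM i z' b) / (d.J : ℝ)) * d.eM j z a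
            + ((∑ i, d.eM i z a) / (d.J : ℝ)) * d.eM j z' b
            - ((∑ i, d.eM i z a) / (d.J : ℝ)) * ((∑ i, d.eM i z' b) / (d.J : ℝ))) :=
      fun j => by ring
    rw [Finset.sum_congr rfl fun j _ => hexp j, Finset.sum_sub_distrib]
    have hmid : (∑ j, (((∑ i, d.eM i z' b) / (d.J : ℝ)) * d.eM j z a
            + ((∑ i, d.eM i z a) / (d.J : ℝ)) * d.eM j z' b
            - ((∑ i, d.eM i z a) / (d.J : ℝ)) * ((∑ i, d.eM i z' b) / (d.J : ℝ))))
        = ((∑ i, d.eM i z' b) / (d.J : ℝ)) * (∑ i, d.eM i z a)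
          + ((∑ i, d.eM i z a) / (d.J : ℝ)) * (∑ i, d.eM i z' b)
          - (d.J : ℝ) * (((∑ i, d.eM i z a) / (d.J : ℝ))
              * ((∑ i, d.eM i z' b) / (d.J : ℝ))) := by
      rw [Finset.sum_sub_distrib, Finset.sum_add_distrib, ← Finset.mul_sum, ← Finset.mul_sum,
        Finset.sum_const, Finset.card_univ, Fintype.card_fin, nsmul_eq_mul]
    rw [hmid]
    field_simp
    ring
  rw [d.cov_eq hN hc]
  by_cases hab : a = b
  · subst hab
    rw [if_pos rfl, d.Esig hn1 hN hJ0 z z' a (hJca a) (hJca1 a),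
      d.EYY_eq hn1 hN hJ0 hJ1 z z' a, d.EY hn1 hN hJ0 hJca z a, d.EY hn1 hN hJ0 hJca z' a,
      hRHS]
    have hA0 := hJca a
    have hA1 := hJca1 a
    field_simp
    ring
  · rw [if_neg hab, d.EYY_ne hn1 hN hJ0 hJ1 z z' hab, d.EY hn1 hN hJ0 hJca z a,
      d.EY hn1 hN hJ0 hJca z' b, hRHS]
    have hA0 := hJca a
    have hB0 := hJca b
    field_simp
    ring

end TwoStageDesign

namespace TwoStageDesign
open Finset TSDAux

variable (d : TwoStageDesign)

lemma card_filter_decide {ι : Type*} [Fintype ι] [DecidableEq ι] (s : Finset ι) (z : Bool) :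
    (Finset.univ.filter fun i => decide (i ∈ s) = z).card
      = if z then s.card else Fintype.card ι - s.card := by
  have hmem : Finset.univ.filter (fun i => i ∈ s) = s := by ext i; simp
  cases z
  · have hsplit := Finset.card_filter_add_card_filter_not
      (s := (Finset.univ : Finset ι)) (p := fun i => i ∈ s)
    rw [hmem] at hsplit
    have heq : (Finset.univ.filter fun i => decide (i ∈ s) = false)
        = Finset.univ.filter (fun i => ¬ i ∈ s) := by
      ext i; simp
    rw [heq, if_neg Bool.false_ne_true, ← Finset.card_univ (α := ι)]
    omega
  · have heq : (Finset.univ.filter fun i => decide (i ∈ s) = true)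
        = Finset.univ.filter (fun i => i ∈ s) := by
      ext i; simp
    rw [heq, hmem]
    simp

lemma eM_eq_Ybarj (j : Fin d.J) (z : Bool) (a : Fin d.m)
    (h1 : 1 ≤ d.n1 j a) (h2 : d.n1 j a ≤ d.n j - 1) (hn2 : 2 ≤ d.n j) :
    d.eM j z a = d.Ybarj j z a := by
  classical
  set n := d.n j with hn
  set k := d.n1 j a with hk
  have hkn : k ≤ n := le_trans h2 (Nat.sub_le _ _)
  have hn0 : (n : ℝ) ≠ 0 := Nat.cast_ne_zero.mpr (by omega)
  set P := d.Psub j a with hP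
  have hPc0 : ((P.card : ℕ) : ℝ) ≠ 0 := by
    rw [hP, d.Psub_card]
    exact_mod_cast (Nat.choose_pos hkn).ne'
  have key : ∃ c : ℝ, c ≠ 0 ∧ ∀ s ∈ P,
      ((Finset.univ.filter fun i => decide (i ∈ s) = z).card : ℝ) = c := by
    cases z
    · refine ⟨(n : ℝ) - (k : ℝ), sub_ne_zero.mpr ?_, ?_⟩
      · exact_mod_cast (by omega : n ≠ k)
      · intro s hs
        have hcs : s.card = k := (Finset.mem_powersetCard.mp hs).2
        rw [card_filter_decide s false, if_neg Bool.false_ne_true, Fintype.card_fin, hcs,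
          Nat.cast_sub hkn]
    · refine ⟨(k : ℝ), Nat.cast_ne_zero.mpr (by omega), ?_⟩
      intro s hs
      have hcs : s.card = k := (Finset.mem_powersetCard.mp hs).2
      rw [card_filter_decide s true, if_pos rfl, hcs]
  obtain ⟨cR, hcR0, hfc⟩ := key
  have hg : ∀ s ∈ P, d.gl j z a s
      = (∑ i ∈ Finset.univ.filter (fun i => decide (i ∈ s) = z), d.Y j i z a) / cR := by
    intro s hs
    simp only [gl]
    rw [hfc s hs]
  have swapT : (∑ s ∈ P, ∑ i ∈ Finset.univ.filter (fun i => decide (i ∈ s) = z), d.Y j i z a)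
      = ∑ i, d.Y j i z a * (∑ s ∈ P, if decide (i ∈ s) = z then (1:ℝ) else 0) := by
    rw [Finset.sum_congr rfl fun s (_ : s ∈ P) => Finset.sum_filter _ _, Finset.sum_comm]
    refine Finset.sum_congr rfl fun i _ => ?_
    rw [Finset.mul_sum]
    refine Finset.sum_congr rfl fun s _ => ?_
    by_cases h : decide (i ∈ s) = z <;> simp [h]
  have hconst : ∀ i i' : Fin (d.n j),
      (∑ s ∈ P, if decide (i' ∈ s) = z then (1:ℝ) else 0)
        = ∑ s ∈ P, if decide (i ∈ s) = z then (1:ℝ) else 0 := by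
    intro i i'
    rw [Finset.sum_boole, Finset.sum_boole]
    congr 1
    refine card_filter_equiv P (Equiv.finsetCongr (Equiv.swap i i')) (fun t => ?_) _ _
      (fun t => ?_)
    · constructor <;> intro ht <;>
        [ (have hc' : (Equiv.finsetCongr (Equiv.swap i i') t).card = t.card :=
            Finset.card_map _);
          (have hc' : (Equiv.finsetCongr (Equiv.swap i i') t).card = t.card :=
            Finset.card_map _) ] <;>
      · rw [hP, Psub, Finset.mem_powersetCard] at *
        exact ⟨Finset.subset_univ _, by omega⟩
    · have hiff : (i ∈ (Equiv.finsetCongr (Equiv.swap i i')) t) ↔ i' ∈ t := by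
        rw [Equiv.finsetCongr_apply, Finset.mem_map_equiv, Equiv.symm_swap,
          Equiv.swap_apply_left]
      rw [show decide (i ∈ (Equiv.finsetCongr (Equiv.swap i i')) t) = decide (i' ∈ t) from
        decide_eq_decide.mpr hiff]
  have hcnt : ∀ i : Fin (d.n j),
      (∑ s ∈ P, if decide (i ∈ s) = z then (1:ℝ) else 0) = (P.card : ℝ) * cR / (n : ℝ) := by
    intro i
    have hsum : (∑ i' : Fin (d.n j), ∑ s ∈ P, if decide (i' ∈ s) = z then (1:ℝ) else 0)
        = (P.card : ℝ) * cR := by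
      rw [Finset.sum_comm,
        Finset.sum_congr rfl (fun s hs => by rw [Finset.sum_boole, hfc s hs]),
        Finset.sum_const, nsmul_eq_mul, mul_comm]
    have htot : (n : ℝ) * (∑ s ∈ P, if decide (i ∈ s) = z then (1:ℝ) else 0)
        = (P.card : ℝ) * cR := by
      rw [← hsum, Finset.sum_congr rfl fun i' _ => hconst i i', Finset.sum_const,
        Finset.card_univ, Fintype.card_fin, nsmul_eq_mul]
    rw [eq_div_iff hn0]
    linear_combination htot
  simp only [eM]
  rw [Finset.sum_congr rfl hg, ← Finset.sum_div, swapT,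
    Finset.sum_congr rfl fun i (_ : i ∈ Finset.univ) => by rw [hcnt i],
    ← Finset.sum_mul]
  show _ = (∑ i, d.Y j i z a) / (n : ℝ)
  field_simp
  rw [← hP, mul_div_cancel_right₀ _ hPc0]

end TwoStageDesign

/-- **Conservativeness of the covariance estimator (Theorem 3).** Under the two-stage
randomized design with `J_a ≥ 2` for all mechanisms `a`, the `2m × 2m` matrix
`E[D̂] − D` is positive semidefinite, where `D = J·cov(Ŷ)` and `D̂` is the block-diagonal
estimator whose `a`-th `2×2` block is `(J/J_a) [[σ̂_b²(1,a), σ̂_b²(1,0;a)],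
[σ̂_b²(1,0;a), σ̂_b²(0,a)]]`.  Rows and columns are indexed by pairs `(a, z)` with
`a` a mechanism and `z` a treatment condition. -/
theorem Dhat_conservative (d : TwoStageDesign)
    (hJ : 2 ≤ d.J) (hn : ∀ j, 2 ≤ d.n j)
    (hJc : ∀ a, 2 ≤ d.Jc a) (hJsum : ∑ a, d.Jc a = d.J)
    (hn1lo : ∀ j a, 1 ≤ d.n1 j a) (hn1hi : ∀ j a, d.n1 j a ≤ d.n j - 1) :
    Matrix.PosSemidef
      (Matrix.of fun p q : Fin d.m × Bool =>
        (if p.1 = q.1 then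
            d.expec (fun A S => ((d.J : ℝ) / (d.Jc p.1 : ℝ)) * d.sigBhat A S p.2 q.2 p.1)
          else 0) -
        (d.J : ℝ) *
          d.cov (fun A S => d.hatY A S p.2 p.1) (fun A S => d.hatY A S q.2 q.1)) := by
  classical
  have hn1 : ∀ j a, d.n1 j a ≤ d.n j := fun j a => le_trans (hn1hi j a) (Nat.sub_le _ _)
  have hN : (d.mechA.card : ℝ) ≠ 0 := d.mechA_card_ne hJsum
  have hc : ∀ A, ((d.treatA A).card : ℝ) ≠ 0 := d.treatA_card_ne hn1
  have hJ2 : (2 : ℝ) ≤ (d.J : ℝ) := by exact_mod_cast hJ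
  have hJ0 : (d.J : ℝ) ≠ 0 := by linarith
  have hJ1 : (d.J : ℝ) - 1 ≠ 0 := by linarith
  have hJc2 : ∀ a, (2 : ℝ) ≤ (d.Jc a : ℝ) := fun a => by exact_mod_cast hJc a
  have hJca : ∀ a, (d.Jc a : ℝ) ≠ 0 := fun a => by linarith [hJc2 a]
  have hJca1 : ∀ a, (d.Jc a : ℝ) - 1 ≠ 0 := fun a => by linarith [hJc2 a]
  have hF1 : ∀ (j : Fin d.J) (z : Bool) (a : Fin d.m), d.eM j z a = d.Ybarj j z a :=
    fun j z a => d.eM_eq_Ybarj j z a (hn1lo j a) (hn1hi j a) (hn j)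
  have hybar : ∀ (z : Bool) (a : Fin d.m),
      (∑ i, d.Ybarj i z a) / (d.J : ℝ) = d.Ybar z a := fun z a => rfl
  set c := Real.sqrt ((d.J : ℝ) - 1) with hcdef
  have hc2 : c * c = (d.J : ℝ) - 1 := Real.mul_self_sqrt (by linarith)
  set A : Matrix (Fin d.J) (Fin d.m × Bool) ℝ :=
    Matrix.of (fun j (p : Fin d.m × Bool) =>
      (d.Ybarj j p.2 p.1 - d.Ybar p.2 p.1) / c) with hA
  have hmat : (Matrix.of fun p q : Fin d.m × Bool =>
        (if p.1 = q.1 then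
            d.expec (fun A S => ((d.J : ℝ) / (d.Jc p.1 : ℝ)) * d.sigBhat A S p.2 q.2 p.1)
          else 0) -
        (d.J : ℝ) *
          d.cov (fun A S => d.hatY A S p.2 p.1) (fun A S => d.hatY A S q.2 q.1))
      = A.conjTranspose * A := by
    ext p q
    rw [Matrix.mul_apply]
    simp only [Matrix.conjTranspose_apply, Matrix.of_apply, star_trivial, hA]
    rw [d.entry hn1 hN hc hJ0 hJ1 hJca hJca1 p.1 q.1 p.2 q.2]
    simp only [hF1, hybar]
    have hterm : ∀ j : Fin d.J,
        ((d.Ybarj j p.2 p.1 - d.Ybar p.2 p.1) / c)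
          * ((d.Ybarj j q.2 q.1 - d.Ybar q.2 q.1) / c)
        = (d.Ybarj j p.2 p.1 - d.Ybar p.2 p.1) * (d.Ybarj j q.2 q.1 - d.Ybar q.2 q.1)
            / ((d.J : ℝ) - 1) := by
      intro j
      rw [div_mul_div_comm, hc2]
    rw [Finset.sum_congr rfl fun j _ => hterm j, ← Finset.sum_div]
  rw [hmat]
  exact Matrix.posSemidef_conjTranspose_mul_self A
end
end

section
/- Under the two-stage randomized design with J_a ≥ 2 for all mechanisms a, if the cluster-level average potential outcomes are constant across clusters, i.e. Ȳ_j(z,a) does not depend on j for every z ∈ {0,1} and every mechanism a, then the block-diagonal covariance estimator is exactly unbiased: E[D̂] = D, where D = J · cov(Ŷ). -/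
/-!
Two-stage randomized experiments (Jiang & Imai).
STATEMENT 0: Unbiasedness of Ŷ(z,a): E[Ŷ(z,a)] = Ȳ(z,a).
-/

open scoped BigOperators

noncomputable section

section AuxSection
open Finset


/-- Number of `k`-subsets containing a fixed element. -/
lemma card_filter_mem_powersetCard {α : Type*} [Fintype α] [DecidableEq α] (i : α) (k : ℕ)
    (hk : 1 ≤ k) :
    (((Finset.univ : Finset α).powersetCard k).filter (fun s => i ∈ s)).card
      = (Fintype.card α - 1).choose (k - 1) := by
  have hc : (Finset.univ.erase i).card = Fintype.card α - 1 := by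
    rw [Finset.card_erase_of_mem (Finset.mem_univ i), Finset.card_univ]
  rw [← hc, ← Finset.card_powersetCard (k - 1) (Finset.univ.erase i)]
  · refine Finset.card_bij' (fun s _ => s.erase i) (fun t _ => insert i t) ?_ ?_ ?_ ?_
    · intro s hs
      simp only [mem_filter, mem_powersetCard] at hs
      simp only [mem_powersetCard]
      refine ⟨Finset.erase_subset_erase i hs.1.1, ?_⟩
      rw [Finset.card_erase_of_mem hs.2, hs.1.2]
    · intro t ht
      simp only [mem_powersetCard] at ht
      have hit : i ∉ t := fun h => (Finset.mem_erase.1 (ht.1 h)).1 rfl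
      simp only [mem_filter, mem_powersetCard]
      refine ⟨⟨Finset.subset_univ _, ?_⟩, Finset.mem_insert_self i t⟩
      rw [Finset.card_insert_of_notMem hit, ht.2]
      omega
    · intro s hs
      simp only [mem_filter] at hs
      exact Finset.insert_erase hs.2
    · intro t ht
      simp only [mem_powersetCard] at ht
      have hit : i ∉ t := fun h => (Finset.mem_erase.1 (ht.1 h)).1 rfl
      exact Finset.erase_insert hit

lemma sum_powersetCard_sum_mem {α : Type*} [Fintype α] [DecidableEq α] (k : ℕ) (hk : 1 ≤ k)
    (f : α → ℝ) :
    ∑ s ∈ (Finset.univ : Finset α).powersetCard k, ∑ i ∈ s, f i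
      = ((Fintype.card α - 1).choose (k - 1) : ℝ) * ∑ i, f i := by
  have h1 : ∀ s : Finset α, ∑ i ∈ s, f i = ∑ i, if i ∈ s then f i else 0 := by
    intro s
    rw [Finset.sum_ite_mem, Finset.univ_inter]
  simp_rw [h1]
  rw [Finset.sum_comm]
  have h2 : ∀ i : α, (∑ s ∈ (Finset.univ : Finset α).powersetCard k, if i ∈ s then f i else 0)
      = ((Fintype.card α - 1).choose (k - 1) : ℝ) * f i := by
    intro i
    rw [← Finset.sum_filter, Finset.sum_const, ← card_filter_mem_powersetCard i k hk]
    simp [mul_comm]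
  simp_rw [h2, ← Finset.mul_sum]
  simp

/-- Average over `k`-subsets of the subset-mean equals the overall mean, times the count. -/
lemma sum_powersetCard_avg {N k : ℕ} (hk1 : 1 ≤ k) (hk2 : k ≤ N) (f : Fin N → ℝ) :
    ∑ s ∈ (Finset.univ : Finset (Fin N)).powersetCard k, (∑ i ∈ s, f i) / (s.card : ℝ)
      = (N.choose k : ℝ) * ((∑ i, f i) / (N : ℝ)) := by
  have hN : 1 ≤ N := le_trans hk1 hk2
  have hcard : ∀ s ∈ (Finset.univ : Finset (Fin N)).powersetCard k, (s.card : ℝ) = (k : ℝ) := by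
    intro s hs; rw [(Finset.mem_powersetCard.1 hs).2]
  calc ∑ s ∈ (Finset.univ : Finset (Fin N)).powersetCard k, (∑ i ∈ s, f i) / (s.card : ℝ)
      = ∑ s ∈ (Finset.univ : Finset (Fin N)).powersetCard k, (∑ i ∈ s, f i) / (k : ℝ) := by
        refine Finset.sum_congr rfl fun s hs => by rw [hcard s hs]
    _ = (∑ s ∈ (Finset.univ : Finset (Fin N)).powersetCard k, ∑ i ∈ s, f i) / (k : ℝ) := by
        rw [Finset.sum_div]
    _ = ((N - 1).choose (k - 1) : ℝ) * (∑ i, f i) / (k : ℝ) := by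
        rw [sum_powersetCard_sum_mem k hk1 f]; simp
    _ = (N.choose k : ℝ) * ((∑ i, f i) / (N : ℝ)) := by
        have key : (N : ℕ) * (N - 1).choose (k - 1) = N.choose k * k := by
          obtain ⟨N', rfl⟩ : ∃ N', N = N' + 1 := ⟨N - 1, by omega⟩
          obtain ⟨k', rfl⟩ : ∃ k', k = k' + 1 := ⟨k - 1, by omega⟩
          simpa using Nat.add_one_mul_choose_eq N' k'
        have keyR : (N : ℝ) * ((N - 1).choose (k - 1) : ℝ) = (N.choose k : ℝ) * (k : ℝ) := by
          exact_mod_cast congrArg (fun x : ℕ => (x : ℝ)) key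
        have hk0 : (k : ℝ) ≠ 0 := by positivity
        have hN0 : (N : ℝ) ≠ 0 := by positivity
        field_simp
        linear_combination (∑ i, f i) * keyR


section PiFactor
variable {ι : Type*} [Fintype ι] [DecidableEq ι] {δ : ι → Type*} [∀ i, DecidableEq (δ i)]

lemma sum_piFinset_single (t : ∀ i, Finset (δ i)) (j : ι) (φ : δ j → ℝ) :
    ∑ S ∈ Fintype.piFinset t, φ (S j)
      = (∏ i ∈ Finset.univ.erase j, ((t i).card : ℝ)) * ∑ x ∈ t j, φ x := by
  classical
  set g : ∀ i, δ i → ℝ := fun i x => if h : i = j then φ (h ▸ x) else 1 with hg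
  have hS : ∀ S : ∀ i, δ i, φ (S j) = ∏ i, g i (S i) := by
    intro S
    rw [← Finset.mul_prod_erase Finset.univ (fun i => g i (S i)) (Finset.mem_univ j)]
    have h1 : g j (S j) = φ (S j) := by simp [hg]
    have h2 : ∀ i ∈ Finset.univ.erase j, g i (S i) = 1 := by
      intro i hi
      simp [hg, (Finset.mem_erase.1 hi).1]
    rw [Finset.prod_congr rfl h2, h1]
    simp
  simp_rw [hS]
  rw [← Finset.prod_univ_sum]
  rw [← Finset.mul_prod_erase Finset.univ (fun i => ∑ x ∈ t i, g i x) (Finset.mem_univ j)]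
  have h1 : ∑ x ∈ t j, g j x = ∑ x ∈ t j, φ x := by
    refine Finset.sum_congr rfl fun x _ => by simp [hg]
  have h2 : ∀ i ∈ Finset.univ.erase j, ∑ x ∈ t i, g i x = ((t i).card : ℝ) := by
    intro i hi
    have : ∀ x ∈ t i, g i x = 1 := fun x _ => by simp [hg, (Finset.mem_erase.1 hi).1]
    rw [Finset.sum_congr rfl this, Finset.sum_const]
    simp
  rw [h1, Finset.prod_congr rfl h2, mul_comm]

lemma sum_piFinset_pair (t : ∀ i, Finset (δ i)) {j j' : ι} (hne : j ≠ j')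
    (φ : δ j → ℝ) (ψ : δ j' → ℝ) :
    ∑ S ∈ Fintype.piFinset t, φ (S j) * ψ (S j')
      = (∏ i ∈ (Finset.univ.erase j).erase j', ((t i).card : ℝ))
          * ((∑ x ∈ t j, φ x) * (∑ x ∈ t j', ψ x)) := by
  classical
  set g : ∀ i, δ i → ℝ :=
    fun i x => if h : i = j then φ (h ▸ x) else if h' : i = j' then ψ (h' ▸ x) else 1 with hg
  have hj'mem : j' ∈ Finset.univ.erase j := Finset.mem_erase.2 ⟨hne.symm, Finset.mem_univ _⟩
  have hS : ∀ S : ∀ i, δ i, φ (S j) * ψ (S j') = ∏ i, g i (S i) := by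
    intro S
    rw [← Finset.mul_prod_erase Finset.univ (fun i => g i (S i)) (Finset.mem_univ j),
      ← Finset.mul_prod_erase _ (fun i => g i (S i)) hj'mem]
    have h1 : g j (S j) = φ (S j) := by simp [hg]
    have h2 : g j' (S j') = ψ (S j') := by simp [hg, hne.symm]
    have h3 : ∀ i ∈ (Finset.univ.erase j).erase j', g i (S i) = 1 := by
      intro i hi
      obtain ⟨hij', hij⟩ := Finset.mem_erase.1 hi
      simp [hg, (Finset.mem_erase.1 hij).1, hij']
    rw [Finset.prod_congr rfl h3, h1, h2]
    simp [mul_assoc]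
  simp_rw [hS]
  rw [← Finset.prod_univ_sum]
  rw [← Finset.mul_prod_erase Finset.univ (fun i => ∑ x ∈ t i, g i x) (Finset.mem_univ j),
    ← Finset.mul_prod_erase _ (fun i => ∑ x ∈ t i, g i x) hj'mem]
  have h1 : ∑ x ∈ t j, g j x = ∑ x ∈ t j, φ x :=
    Finset.sum_congr rfl fun x _ => by simp [hg]
  have h2 : ∑ x ∈ t j', g j' x = ∑ x ∈ t j', ψ x :=
    Finset.sum_congr rfl fun x _ => by simp [hg, hne.symm]
  have h3 : ∀ i ∈ (Finset.univ.erase j).erase j', ∑ x ∈ t i, g i x = ((t i).card : ℝ) := by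
    intro i hi
    obtain ⟨hij', hij⟩ := Finset.mem_erase.1 hi
    have : ∀ x ∈ t i, g i x = 1 := fun x _ => by simp [hg, (Finset.mem_erase.1 hij).1, hij']
    rw [Finset.sum_congr rfl this, Finset.sum_const]
    simp
  rw [h1, h2, Finset.prod_congr rfl h3]
  ring

end PiFactor


namespace TwoStageDesignAux

variable (d : TwoStageDesign)

lemma mechA_nonempty (hJsum : ∑ a, d.Jc a = d.J) : d.mechA.Nonempty := by
  classical
  have hcard : Fintype.card (Σ a : Fin d.m, Fin (d.Jc a)) = d.J := by
    simp [Fintype.card_sigma, hJsum]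
  let e : (Σ a : Fin d.m, Fin (d.Jc a)) ≃ Fin d.J := Fintype.equivFinOfCardEq hcard
  refine ⟨fun j => (e.symm j).1, ?_⟩
  simp only [TwoStageDesign.mechA, Finset.mem_filter, Finset.mem_univ, true_and]
  intro a
  have hb : (Finset.univ.filter fun j : Fin d.J => (e.symm j).1 = a).card
      = (Finset.univ.filter fun s : Σ b : Fin d.m, Fin (d.Jc b) => s.1 = a).card := by
    refine Finset.card_bij' (fun j _ => e.symm j) (fun s _ => e s) ?_ ?_ ?_ ?_
    · intro j hj; simpa using (Finset.mem_filter.1 hj).2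
    · intro s hs; simp only [Finset.mem_filter, Finset.mem_univ, true_and]
      simpa using (Finset.mem_filter.1 hs).2
    · intro j _; simp
    · intro s _; simp
  rw [hb, Finset.card_filter, ← Finset.univ_sigma_univ, Finset.sum_sigma]
  have h1 : ∀ b : Fin d.m, (∑ _s : Fin (d.Jc b), if b = a then (1 : ℕ) else 0)
      = if b = a then d.Jc b else 0 := by
    intro b; split <;> simp
  rw [Finset.sum_congr rfl fun b _ => h1 b]
  simp

lemma mechA_count_card {A : Fin d.J → Fin d.m} (hA : A ∈ d.mechA) (a : Fin d.m) :
    (Finset.univ.filter fun j => A j = a).card = d.Jc a := by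
  simpa [TwoStageDesign.mechA] using (Finset.mem_filter.1 hA).2 a

/-- composing with a permutation preserves membership in `mechA`. -/
lemma mechA_comp_perm {A : Fin d.J → Fin d.m} (hA : A ∈ d.mechA) (σ : Equiv.Perm (Fin d.J)) :
    (fun j => A (σ j)) ∈ d.mechA := by
  simp only [TwoStageDesign.mechA, Finset.mem_filter, Finset.mem_univ, true_and] at hA ⊢
  intro a
  rw [← hA a]
  refine Finset.card_bij' (fun j _ => σ j) (fun j _ => σ.symm j) ?_ ?_ ?_ ?_
  · intro j hj; simpa using (Finset.mem_filter.1 hj).2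
  · intro j hj
    simp only [Finset.mem_filter, Finset.mem_univ, true_and]
    simpa using (Finset.mem_filter.1 hj).2
  · intro j _; simp
  · intro j _; simp

lemma mechA_filter_card_const (j j' : Fin d.J) (a : Fin d.m) :
    (d.mechA.filter fun A => A j = a).card = (d.mechA.filter fun A => A j' = a).card := by
  classical
  refine Finset.card_bij' (fun A _ => fun k => A (Equiv.swap j j' k))
    (fun A _ => fun k => A (Equiv.swap j j' k)) ?_ ?_ ?_ ?_
  · intro A hA
    obtain ⟨hA1, hA2⟩ := Finset.mem_filter.1 hA
    refine Finset.mem_filter.2 ⟨mechA_comp_perm d hA1 _, ?_⟩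
    simpa [Equiv.swap_apply_right] using hA2
  · intro A hA
    obtain ⟨hA1, hA2⟩ := Finset.mem_filter.1 hA
    refine Finset.mem_filter.2 ⟨mechA_comp_perm d hA1 _, ?_⟩
    simpa [Equiv.swap_apply_left] using hA2
  · intro A _; funext k; simp
  · intro A _; funext k; simp

/-- Key counting identity: `J * #{A ∈ mechA : A j = a} = Jc a * #mechA`. -/
lemma mechA_filter_card (j : Fin d.J) (a : Fin d.m) :
    d.J * (d.mechA.filter fun A => A j = a).card = d.Jc a * d.mechA.card := by
  classical
  have hsum : ∑ j' : Fin d.J, (d.mechA.filter fun A => A j' = a).card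
      = d.Jc a * d.mechA.card := by
    have : ∀ j' : Fin d.J, (d.mechA.filter fun A => A j' = a).card
        = ∑ A ∈ d.mechA, if A j' = a then 1 else 0 := fun j' => Finset.card_filter _ _
    simp_rw [this]
    rw [Finset.sum_comm]
    have : ∀ A ∈ d.mechA, (∑ j' : Fin d.J, if A j' = a then 1 else 0) = d.Jc a := by
      intro A hA
      rw [← Finset.card_filter, mechA_count_card d hA]
    rw [Finset.sum_congr rfl this, Finset.sum_const, smul_eq_mul, mul_comm]
  have hconst : ∀ j' : Fin d.J, (d.mechA.filter fun A => A j' = a).card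
      = (d.mechA.filter fun A => A j = a).card := fun j' => mechA_filter_card_const d j' j a
  rw [← hsum, Finset.sum_congr rfl fun j' _ => hconst j', Finset.sum_const, smul_eq_mul,
    Finset.card_univ, Fintype.card_fin]

end TwoStageDesignAux

namespace TwoStageDesignAux
variable (d : TwoStageDesign)

/-- The set of possible treated sets in cluster `j` under mechanism `a`. -/
def P (j : Fin d.J) (a : Fin d.m) : Finset (Finset (Fin (d.n j))) :=
  (Finset.univ : Finset (Fin (d.n j))).powersetCard (d.n1 j a)

/-- Cluster-level group mean as a function of the treated set only. -/
def h (j : Fin d.J) (a : Fin d.m) (z : Bool) (s : Finset (Fin (d.n j))) : ℝ :=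
  (∑ i ∈ Finset.univ.filter (fun i => decide (i ∈ s) = z), d.Y j i z a) /
    ((Finset.univ.filter (fun i : Fin (d.n j) => decide (i ∈ s) = z)).card : ℝ)

lemma hatYj_eq (A : Fin d.J → Fin d.m) (S : (j : Fin d.J) → Finset (Fin (d.n j)))
    (z : Bool) (j : Fin d.J) : d.hatYj A S z j = h d j (A j) z (S j) := by
  unfold TwoStageDesign.hatYj TwoStageDesign.Yobs h
  congr 1
  refine Finset.sum_congr rfl fun i hi => ?_
  rw [(Finset.mem_filter.1 hi).2]

lemma card_P (j : Fin d.J) (a : Fin d.m) :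
    (P d j a).card = (d.n j).choose (d.n1 j a) := by
  rw [P, Finset.card_powersetCard, Finset.card_univ, Fintype.card_fin]

lemma card_P_pos (hhi : ∀ j a, d.n1 j a ≤ d.n j - 1) (j : Fin d.J) (a : Fin d.m) :
    0 < (P d j a).card := by
  rw [card_P]
  exact Nat.choose_pos (le_trans (hhi j a) (Nat.sub_le _ _))

/-- First moment of `h` over the possible treated sets. -/
lemma sum_h (hn : ∀ j, 2 ≤ d.n j) (hlo : ∀ j a, 1 ≤ d.n1 j a)
    (hhi : ∀ j a, d.n1 j a ≤ d.n j - 1) (j : Fin d.J) (a : Fin d.m) (z : Bool) :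
    ∑ s ∈ P d j a, h d j a z s = ((P d j a).card : ℝ) * d.Ybarj j z a := by
  have hnj : 2 ≤ d.n j := hn j
  have h1 : 1 ≤ d.n1 j a := hlo j a
  have h2 : d.n1 j a ≤ d.n j - 1 := hhi j a
  rw [card_P]
  cases z with
  | true =>
    have hfil : ∀ s : Finset (Fin (d.n j)),
        Finset.univ.filter (fun i => decide (i ∈ s) = true) = s := by
      intro s; ext i; simp
    have hh : ∀ s, h d j a true s = (∑ i ∈ s, d.Y j i true a) / (s.card : ℝ) := by
      intro s; rw [h, hfil]
    simp_rw [hh]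
    rw [P, sum_powersetCard_avg h1 (by omega) (fun i => d.Y j i true a)]
    rfl
  | false =>
    have hfil : ∀ s : Finset (Fin (d.n j)),
        Finset.univ.filter (fun i => decide (i ∈ s) = false) = sᶜ := by
      intro s; ext i; simp
    have hh : ∀ s, h d j a false s = (∑ i ∈ sᶜ, d.Y j i false a) / ((sᶜ : Finset _).card : ℝ) := by
      intro s; rw [h, hfil]
    simp_rw [hh]
    have hbij : ∑ s ∈ P d j a, (∑ i ∈ sᶜ, d.Y j i false a) / ((sᶜ : Finset _).card : ℝ)
        = ∑ t ∈ (Finset.univ : Finset (Fin (d.n j))).powersetCard (d.n j - d.n1 j a),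
            (∑ i ∈ t, d.Y j i false a) / ((t : Finset _).card : ℝ) := by
      refine Finset.sum_nbij' (fun s => sᶜ) (fun t => tᶜ) ?_ ?_ ?_ ?_ ?_
      · intro s hs
        rw [P, Finset.mem_powersetCard] at hs
        rw [Finset.mem_powersetCard]
        refine ⟨Finset.subset_univ _, ?_⟩
        rw [Finset.card_compl, hs.2, Fintype.card_fin]
      · intro t ht
        rw [Finset.mem_powersetCard] at ht
        rw [P, Finset.mem_powersetCard]
        refine ⟨Finset.subset_univ _, ?_⟩
        rw [Finset.card_compl, ht.2, Fintype.card_fin]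
        omega
      · intro s _; simp
      · intro t _; simp
      · intro s _; rfl
    rw [hbij, sum_powersetCard_avg (by omega) (by omega) (fun i => d.Y j i false a),
      Nat.choose_symm (by omega)]
    rfl

/-- `treatA` is a product set. -/
lemma treatA_eq (A : Fin d.J → Fin d.m) :
    d.treatA A = Fintype.piFinset (fun j => P d j (A j)) := by
  ext S
  simp [TwoStageDesign.treatA, P, Fintype.mem_piFinset, Finset.mem_powersetCard,
    Finset.subset_univ]

lemma T_eq (A : Fin d.J → Fin d.m) :
    ((d.treatA A).card : ℝ) = ∏ j, ((P d j (A j)).card : ℝ) := by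
  rw [treatA_eq, Fintype.card_piFinset]
  push_cast
  rfl

lemma Tpi (A : Fin d.J → Fin d.m) :
    ((Fintype.piFinset fun j => P d j (A j)).card : ℝ) = ∏ j, ((P d j (A j)).card : ℝ) := by
  rw [Fintype.card_piFinset]
  push_cast
  rfl

lemma T_pos (hhi : ∀ j a, d.n1 j a ≤ d.n j - 1) (A : Fin d.J → Fin d.m) :
    0 < ((d.treatA A).card : ℝ) := by
  rw [T_eq]
  exact Finset.prod_pos fun j _ => by exact_mod_cast card_P_pos d hhi j (A j)

/-- Second moment of `h` on a single cluster. -/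
def M2 (j : Fin d.J) (a : Fin d.m) (z z' : Bool) : ℝ :=
  (∑ s ∈ P d j a, h d j a z s * h d j a z' s) / ((P d j a).card : ℝ)

/-- Within-cluster covariance contribution. -/
def cj (j : Fin d.J) (a : Fin d.m) (z z' : Bool) : ℝ :=
  M2 d j a z z' - d.Ybarj j z a * d.Ybarj j z' a

lemma sum_treatA_h (hn : ∀ j, 2 ≤ d.n j) (hlo : ∀ j a, 1 ≤ d.n1 j a)
    (hhi : ∀ j a, d.n1 j a ≤ d.n j - 1) (A : Fin d.J → Fin d.m) (j : Fin d.J) (z : Bool) :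
    ∑ S ∈ d.treatA A, h d j (A j) z (S j)
      = ((d.treatA A).card : ℝ) * d.Ybarj j z (A j) := by
  rw [treatA_eq, sum_piFinset_single (fun j => P d j (A j)) j (h d j (A j) z),
    sum_h d hn hlo hhi j (A j) z, Tpi,
    ← Finset.mul_prod_erase Finset.univ (fun i => ((P d i (A i)).card : ℝ)) (Finset.mem_univ j)]
  ring

lemma sum_treatA_hh (hn : ∀ j, 2 ≤ d.n j) (hlo : ∀ j a, 1 ≤ d.n1 j a)
    (hhi : ∀ j a, d.n1 j a ≤ d.n j - 1) (A : Fin d.J → Fin d.m) {j j' : Fin d.J}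
    (hne : j ≠ j') (z z' : Bool) :
    ∑ S ∈ d.treatA A, h d j (A j) z (S j) * h d j' (A j') z' (S j')
      = ((d.treatA A).card : ℝ) * (d.Ybarj j z (A j) * d.Ybarj j' z' (A j')) := by
  rw [treatA_eq, sum_piFinset_pair (fun j => P d j (A j)) hne (h d j (A j) z) (h d j' (A j') z'),
    sum_h d hn hlo hhi j (A j) z, sum_h d hn hlo hhi j' (A j') z', Tpi]
  have hj' : j' ∈ Finset.univ.erase j := Finset.mem_erase.2 ⟨hne.symm, Finset.mem_univ _⟩
  rw [← Finset.mul_prod_erase Finset.univ (fun i => ((P d i (A i)).card : ℝ)) (Finset.mem_univ j),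
    ← Finset.mul_prod_erase _ (fun i => ((P d i (A i)).card : ℝ)) hj']
  ring

lemma sum_treatA_hhj (hhi : ∀ j a, d.n1 j a ≤ d.n j - 1)
    (A : Fin d.J → Fin d.m) (j : Fin d.J) (z z' : Bool) :
    ∑ S ∈ d.treatA A, h d j (A j) z (S j) * h d j (A j) z' (S j)
      = ((d.treatA A).card : ℝ) * M2 d j (A j) z z' := by
  have hc : ((P d j (A j)).card : ℝ) ≠ 0 := by
    exact_mod_cast (card_P_pos d hhi j (A j)).ne'
  rw [treatA_eq,
    sum_piFinset_single (fun j => P d j (A j)) j (fun s => h d j (A j) z s * h d j (A j) z' s)]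
  have : ∑ s ∈ P d j (A j), h d j (A j) z s * h d j (A j) z' s
      = ((P d j (A j)).card : ℝ) * M2 d j (A j) z z' := by
    rw [M2]; field_simp
  rw [this, Tpi,
    ← Finset.mul_prod_erase Finset.univ (fun i => ((P d i (A i)).card : ℝ)) (Finset.mem_univ j)]
  ring

end TwoStageDesignAux

namespace TwoStageDesignAux
variable (d : TwoStageDesign)

lemma sum_treatA_hh_all (hn : ∀ j, 2 ≤ d.n j) (hlo : ∀ j a, 1 ≤ d.n1 j a)
    (hhi : ∀ j a, d.n1 j a ≤ d.n j - 1) (A : Fin d.J → Fin d.m) (j j' : Fin d.J) (z z' : Bool) :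
    ∑ S ∈ d.treatA A, h d j (A j) z (S j) * h d j' (A j') z' (S j')
      = ((d.treatA A).card : ℝ) *
          (if j = j' then M2 d j (A j) z z'
           else d.Ybarj j z (A j) * d.Ybarj j' z' (A j')) := by
  by_cases hjj : j = j'
  · subst hjj
    rw [if_pos rfl]
    exact sum_treatA_hhj d hhi A j z z'
  · rw [if_neg hjj]
    exact sum_treatA_hh d hn hlo hhi A hjj z z'

/-- Rewriting `hatY` through `h`. -/
lemma hatY_eq (A : Fin d.J → Fin d.m) (S : (j : Fin d.J) → Finset (Fin (d.n j)))
    (z : Bool) (a : Fin d.m) :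
    d.hatY A S z a
      = (∑ j ∈ Finset.univ.filter (fun j => A j = a), h d j (A j) z (S j)) / (d.Jc a : ℝ) := by
  rw [TwoStageDesign.hatY]
  congr 1
  exact Finset.sum_congr rfl fun j _ => hatYj_eq d A S z j

section WithMu
variable (μ : Bool → Fin d.m → ℝ)

/-- Conditional (on `A`) first moment of `hatY`. -/
lemma sum_treatA_hatY (hn : ∀ j, 2 ≤ d.n j) (hlo : ∀ j a, 1 ≤ d.n1 j a)
    (hhi : ∀ j a, d.n1 j a ≤ d.n j - 1) (hμ : ∀ j z a, d.Ybarj j z a = μ z a)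
    (hJc : ∀ a, 2 ≤ d.Jc a)
    {A : Fin d.J → Fin d.m} (hA : A ∈ d.mechA) (z : Bool) (a : Fin d.m) :
    ∑ S ∈ d.treatA A, d.hatY A S z a = ((d.treatA A).card : ℝ) * μ z a := by
  have hJc0 : (d.Jc a : ℝ) ≠ 0 := by
    have := hJc a; positivity
  rw [Finset.sum_congr rfl fun S _ => hatY_eq d A S z a, ← Finset.sum_div, Finset.sum_comm]
  rw [Finset.sum_congr rfl fun j hj => by
    rw [sum_treatA_h d hn hlo hhi A j z, (Finset.mem_filter.1 hj).2, hμ j z a]]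
  rw [Finset.sum_const, mechA_count_card d hA a, nsmul_eq_mul]
  field_simp

/-- Conditional (on `A`) second moments of `hatY`. -/
lemma sum_treatA_hatY_mul (hn : ∀ j, 2 ≤ d.n j) (hlo : ∀ j a, 1 ≤ d.n1 j a)
    (hhi : ∀ j a, d.n1 j a ≤ d.n j - 1) (hμ : ∀ j z a, d.Ybarj j z a = μ z a)
    (hJc : ∀ a, 2 ≤ d.Jc a)
    {A : Fin d.J → Fin d.m} (hA : A ∈ d.mechA) (z z' : Bool) (a a' : Fin d.m) :
    ∑ S ∈ d.treatA A, d.hatY A S z a * d.hatY A S z' a'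
      = ((d.treatA A).card : ℝ) *
          (μ z a * μ z' a' +
            if a = a' then
              (∑ j ∈ Finset.univ.filter (fun j => A j = a), cj d j a z z')
                / ((d.Jc a : ℝ) * (d.Jc a : ℝ))
            else 0) := by
  have hJc0 : (d.Jc a : ℝ) ≠ 0 := by have := hJc a; positivity
  have hJc0' : (d.Jc a' : ℝ) ≠ 0 := by have := hJc a'; positivity
  have hpt : ∀ S ∈ d.treatA A, d.hatY A S z a * d.hatY A S z' a'
      = (∑ j ∈ Finset.univ.filter (fun j => A j = a),
          ∑ j' ∈ Finset.univ.filter (fun j' => A j' = a'),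
            h d j (A j) z (S j) * h d j' (A j') z' (S j')) / ((d.Jc a : ℝ) * (d.Jc a' : ℝ)) := by
    intro S _
    rw [hatY_eq, hatY_eq, div_mul_div_comm, Finset.sum_mul_sum]
  rw [Finset.sum_congr rfl hpt, ← Finset.sum_div]
  rw [Finset.sum_comm]
  have hswap : ∀ j ∈ Finset.univ.filter (fun j => A j = a),
      (∑ S ∈ d.treatA A, ∑ j' ∈ Finset.univ.filter (fun j' => A j' = a'),
          h d j (A j) z (S j) * h d j' (A j') z' (S j'))
      = ∑ j' ∈ Finset.univ.filter (fun j' => A j' = a'),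
          ((d.treatA A).card : ℝ) *
            (if j = j' then M2 d j (A j) z z'
             else d.Ybarj j z (A j) * d.Ybarj j' z' (A j')) := by
    intro j _
    rw [Finset.sum_comm]
    exact Finset.sum_congr rfl fun j' _ => sum_treatA_hh_all d hn hlo hhi A j j' z z'
  rw [Finset.sum_congr rfl hswap]
  set T : ℝ := ((d.treatA A).card : ℝ) with hT
  by_cases haa : a = a'
  · subst haa
    rw [if_pos rfl]
    have hterm : ∀ j ∈ Finset.univ.filter (fun j => A j = a),
        (∑ j' ∈ Finset.univ.filter (fun j' => A j' = a),
          T * (if j = j' then M2 d j (A j) z z'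
               else d.Ybarj j z (A j) * d.Ybarj j' z' (A j')))
        = (d.Jc a : ℝ) * (T * (μ z a * μ z' a)) + T * cj d j a z z' := by
      intro j hj
      have hja : A j = a := (Finset.mem_filter.1 hj).2
      have hsplit : ∀ j' ∈ Finset.univ.filter (fun j' => A j' = a),
          T * (if j = j' then M2 d j (A j) z z'
               else d.Ybarj j z (A j) * d.Ybarj j' z' (A j'))
          = T * (μ z a * μ z' a) + (if j = j' then T * cj d j a z z' else 0) := by
        intro j' hj'
        have hja' : A j' = a := (Finset.mem_filter.1 hj').2
        by_cases hjj : j = j'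
        · subst hjj
          rw [if_pos rfl, if_pos rfl, cj, hja, hμ j z a, hμ j z' a]
          ring
        · rw [if_neg hjj, if_neg hjj, hja, hja', hμ j z a, hμ j' z' a, add_zero]
      rw [Finset.sum_congr rfl hsplit, Finset.sum_add_distrib, Finset.sum_const,
        mechA_count_card d hA a, nsmul_eq_mul, Finset.sum_ite_eq (Finset.univ.filter
          (fun j' => A j' = a)) j (fun _ => T * cj d j a z z'), if_pos hj]
    rw [Finset.sum_congr rfl hterm, Finset.sum_add_distrib, Finset.sum_const,
      mechA_count_card d hA a, nsmul_eq_mul, ← Finset.mul_sum]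
    field_simp
  · rw [if_neg haa]
    have hterm : ∀ j ∈ Finset.univ.filter (fun j => A j = a),
        (∑ j' ∈ Finset.univ.filter (fun j' => A j' = a'),
          T * (if j = j' then M2 d j (A j) z z'
               else d.Ybarj j z (A j) * d.Ybarj j' z' (A j')))
        = (d.Jc a' : ℝ) * (T * (μ z a * μ z' a')) := by
      intro j hj
      have hja : A j = a := (Finset.mem_filter.1 hj).2
      have hsplit : ∀ j' ∈ Finset.univ.filter (fun j' => A j' = a'),
          T * (if j = j' then M2 d j (A j) z z'
               else d.Ybarj j z (A j) * d.Ybarj j' z' (A j'))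
          = T * (μ z a * μ z' a') := by
        intro j' hj'
        have hja' : A j' = a' := (Finset.mem_filter.1 hj').2
        have hjj : j ≠ j' := fun hcontra => haa (by rw [← hja, hcontra, hja'])
        rw [if_neg hjj, hja, hja', hμ j z a, hμ j' z' a']
      rw [Finset.sum_congr rfl hsplit, Finset.sum_const, mechA_count_card d hA a', nsmul_eq_mul]
    rw [Finset.sum_congr rfl hterm, Finset.sum_const, mechA_count_card d hA a, nsmul_eq_mul]
    field_simp
    ring

end WithMu

end TwoStageDesignAux

namespace TwoStageDesignAux
variable (d : TwoStageDesign)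

/-- Pointwise expansion of the sample covariance. -/
lemma sigBhat_expand {A : Fin d.J → Fin d.m} (hA : A ∈ d.mechA) (hJc : ∀ b, 2 ≤ d.Jc b)
    (S : (j : Fin d.J) → Finset (Fin (d.n j))) (z z' : Bool) (a : Fin d.m) :
    d.sigBhat A S z z' a
      = ((∑ j ∈ Finset.univ.filter (fun j => A j = a), d.hatYj A S z j * d.hatYj A S z' j)
          - (d.Jc a : ℝ) * (d.hatY A S z a * d.hatY A S z' a)) / ((d.Jc a : ℝ) - 1) := by
  have hJc0 : (d.Jc a : ℝ) ≠ 0 := by have := hJc a; positivity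
  rw [TwoStageDesign.sigBhat]
  congr 1
  set X := d.hatY A S z a with hX
  set Y := d.hatY A S z' a with hY
  have hx : ∑ j ∈ Finset.univ.filter (fun j => A j = a), d.hatYj A S z j = (d.Jc a : ℝ) * X := by
    rw [hX, TwoStageDesign.hatY]
    field_simp
  have hy : ∑ j ∈ Finset.univ.filter (fun j => A j = a), d.hatYj A S z' j
      = (d.Jc a : ℝ) * Y := by
    rw [hY, TwoStageDesign.hatY]
    field_simp
  have expand : ∀ j, (d.hatYj A S z j - X) * (d.hatYj A S z' j - Y)
      = d.hatYj A S z j * d.hatYj A S z' j - Y * d.hatYj A S z j - X * d.hatYj A S z' j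
        + X * Y := by intro j; ring
  rw [Finset.sum_congr rfl fun j _ => expand j, Finset.sum_add_distrib,
    Finset.sum_sub_distrib, Finset.sum_sub_distrib, ← Finset.mul_sum, ← Finset.mul_sum,
    hx, hy, Finset.sum_const, mechA_count_card d hA a, nsmul_eq_mul]
  ring

section WithMu
variable (μ : Bool → Fin d.m → ℝ)

/-- Conditional (on `A`) expectation of the sample covariance. -/
lemma sum_treatA_sigBhat (hn : ∀ j, 2 ≤ d.n j) (hlo : ∀ j a, 1 ≤ d.n1 j a)
    (hhi : ∀ j a, d.n1 j a ≤ d.n j - 1) (hμ : ∀ j z a, d.Ybarj j z a = μ z a)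
    (hJc : ∀ a, 2 ≤ d.Jc a)
    {A : Fin d.J → Fin d.m} (hA : A ∈ d.mechA) (z z' : Bool) (a : Fin d.m) :
    ∑ S ∈ d.treatA A, d.sigBhat A S z z' a
      = ((d.treatA A).card : ℝ) *
          ((∑ j ∈ Finset.univ.filter (fun j => A j = a), cj d j a z z') / (d.Jc a : ℝ)) := by
  have hJc0 : (d.Jc a : ℝ) ≠ 0 := by have := hJc a; positivity
  have hJc1 : (d.Jc a : ℝ) - 1 ≠ 0 := by
    have h2 : (2 : ℝ) ≤ (d.Jc a : ℝ) := by exact_mod_cast hJc a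
    linarith
  rw [Finset.sum_congr rfl fun S _ => sigBhat_expand d hA hJc S z z' a, ← Finset.sum_div,
    Finset.sum_sub_distrib, ← Finset.mul_sum]
  -- first term
  have h1 : ∑ S ∈ d.treatA A, ∑ j ∈ Finset.univ.filter (fun j => A j = a),
      d.hatYj A S z j * d.hatYj A S z' j
      = ((d.treatA A).card : ℝ) *
          ((∑ j ∈ Finset.univ.filter (fun j => A j = a), cj d j a z z')
            + (d.Jc a : ℝ) * (μ z a * μ z' a)) := by
    rw [Finset.sum_comm]
    have hterm : ∀ j ∈ Finset.univ.filter (fun j => A j = a),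
        ∑ S ∈ d.treatA A, d.hatYj A S z j * d.hatYj A S z' j
        = ((d.treatA A).card : ℝ) * (cj d j a z z' + μ z a * μ z' a) := by
      intro j hj
      have hja : A j = a := (Finset.mem_filter.1 hj).2
      have : ∀ S ∈ d.treatA A, d.hatYj A S z j * d.hatYj A S z' j
          = h d j (A j) z (S j) * h d j (A j) z' (S j) := by
        intro S _; rw [hatYj_eq, hatYj_eq]
      rw [Finset.sum_congr rfl this, sum_treatA_hhj d hhi A j z z']
      have : M2 d j (A j) z z' = cj d j a z z' + μ z a * μ z' a := by
        rw [cj, hja, hμ j z a, hμ j z' a]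
        ring
      rw [this]
    rw [Finset.sum_congr rfl hterm, ← Finset.mul_sum, Finset.sum_add_distrib,
      Finset.sum_const, mechA_count_card d hA a, nsmul_eq_mul]
  have h2 : ∑ S ∈ d.treatA A, d.hatY A S z a * d.hatY A S z' a
      = ((d.treatA A).card : ℝ) *
          (μ z a * μ z' a +
            (∑ j ∈ Finset.univ.filter (fun j => A j = a), cj d j a z z')
              / ((d.Jc a : ℝ) * (d.Jc a : ℝ))) := by
    rw [sum_treatA_hatY_mul d μ hn hlo hhi hμ hJc hA z z' a a, if_pos rfl]
  rw [h1, h2]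
  field_simp
  ring

end WithMu
end TwoStageDesignAux

namespace TwoStageDesignAux
variable (d : TwoStageDesign)

lemma expec_eq_of (hmA : d.mechA.Nonempty) (hT : ∀ A, 0 < ((d.treatA A).card : ℝ))
    (f : (Fin d.J → Fin d.m) → ((j : Fin d.J) → Finset (Fin (d.n j))) → ℝ)
    (g : (Fin d.J → Fin d.m) → ℝ)
    (hg : ∀ A ∈ d.mechA, ∑ S ∈ d.treatA A, f A S = ((d.treatA A).card : ℝ) * g A) :
    d.expec f = (∑ A ∈ d.mechA, g A) / (d.mechA.card : ℝ) := by
  rw [TwoStageDesign.expec]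
  have key : ∀ A ∈ d.mechA,
      ∑ S ∈ d.treatA A, f A S / ((d.mechA.card : ℝ) * ((d.treatA A).card : ℝ))
        = g A / (d.mechA.card : ℝ) := by
    intro A hA
    rw [← Finset.sum_div, hg A hA, mul_comm ((d.mechA.card : ℝ)) _]
    exact mul_div_mul_left (g A) _ (hT A).ne'
  rw [Finset.sum_congr rfl key, ← Finset.sum_div]

lemma expec_mul_left (c : ℝ)
    (f : (Fin d.J → Fin d.m) → ((j : Fin d.J) → Finset (Fin (d.n j))) → ℝ) :
    d.expec (fun A S => c * f A S) = c * d.expec f := by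
  rw [TwoStageDesign.expec, TwoStageDesign.expec, Finset.mul_sum]
  refine Finset.sum_congr rfl fun A _ => ?_
  rw [Finset.mul_sum]
  exact Finset.sum_congr rfl fun S _ => by rw [mul_div_assoc]

lemma expec_const (hmA : d.mechA.Nonempty) (hT : ∀ A, 0 < ((d.treatA A).card : ℝ)) (c : ℝ) :
    d.expec (fun _ _ => c) = c := by
  have hcard : (0 : ℝ) < (d.mechA.card : ℝ) := by
    exact_mod_cast Finset.card_pos.2 hmA
  rw [expec_eq_of d hmA hT _ (fun _ => c) (fun A hA => by
    rw [Finset.sum_const, nsmul_eq_mul]), Finset.sum_const, nsmul_eq_mul]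
  field_simp

lemma expec_add
    (f g : (Fin d.J → Fin d.m) → ((j : Fin d.J) → Finset (Fin (d.n j))) → ℝ) :
    d.expec (fun A S => f A S + g A S) = d.expec f + d.expec g := by
  rw [TwoStageDesign.expec, TwoStageDesign.expec, TwoStageDesign.expec,
    ← Finset.sum_add_distrib]
  refine Finset.sum_congr rfl fun A _ => ?_
  rw [← Finset.sum_add_distrib]
  exact Finset.sum_congr rfl fun S _ => by rw [add_div]

lemma cov_eq (hmA : d.mechA.Nonempty) (hT : ∀ A, 0 < ((d.treatA A).card : ℝ))
    (f g : (Fin d.J → Fin d.m) → ((j : Fin d.J) → Finset (Fin (d.n j))) → ℝ) :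
    d.cov f g = d.expec (fun A S => f A S * g A S) - d.expec f * d.expec g := by
  rw [TwoStageDesign.cov]
  have hfun : (fun A S => (f A S - d.expec f) * (g A S - d.expec g))
      = fun A S => f A S * g A S +
          ((-d.expec f) * g A S + ((-d.expec g) * f A S + d.expec f * d.expec g)) := by
    funext A S; ring
  rw [hfun, expec_add, expec_add, expec_add, expec_mul_left, expec_mul_left,
    expec_const d hmA hT]
  ring

lemma sum_mechA_filter (c : Fin d.J → ℝ) (a : Fin d.m) :
    (d.J : ℝ) * ∑ A ∈ d.mechA, ∑ j ∈ Finset.univ.filter (fun j => A j = a), c j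
      = (d.Jc a : ℝ) * (d.mechA.card : ℝ) * ∑ j, c j := by
  have h1 : ∀ A : Fin d.J → Fin d.m, ∑ j ∈ Finset.univ.filter (fun j => A j = a), c j
      = ∑ j, if A j = a then c j else 0 := fun A => Finset.sum_filter _ _
  rw [Finset.sum_congr rfl fun A _ => h1 A, Finset.sum_comm, Finset.mul_sum]
  have h2 : ∀ j, ∑ A ∈ d.mechA, (if A j = a then c j else 0)
      = ((d.mechA.filter fun A => A j = a).card : ℝ) * c j := by
    intro j
    rw [← Finset.sum_filter, Finset.sum_const, nsmul_eq_mul]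
  have h3 : ∀ j : Fin d.J,
      (d.J : ℝ) * (((d.mechA.filter fun A => A j = a).card : ℝ) * c j)
        = (d.Jc a : ℝ) * (d.mechA.card : ℝ) * c j := by
    intro j
    have := mechA_filter_card d j a
    have hR : (d.J : ℝ) * ((d.mechA.filter fun A => A j = a).card : ℝ)
        = (d.Jc a : ℝ) * (d.mechA.card : ℝ) := by exact_mod_cast this
    rw [← mul_assoc, hR]
  rw [Finset.sum_congr rfl fun j _ => by rw [h2 j], Finset.sum_congr rfl fun j _ => h3 j,
    ← Finset.mul_sum]

end TwoStageDesignAux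

namespace TwoStageDesignAux
variable (d : TwoStageDesign)

section Main
variable (μ : Bool → Fin d.m → ℝ)
variable (hn : ∀ j, 2 ≤ d.n j) (hlo : ∀ j a, 1 ≤ d.n1 j a)
  (hhi : ∀ j a, d.n1 j a ≤ d.n j - 1) (hμ : ∀ j z a, d.Ybarj j z a = μ z a)
  (hJc : ∀ a, 2 ≤ d.Jc a) (hJsum : ∑ a, d.Jc a = d.J) (hJ : 2 ≤ d.J)

include hn hlo hhi hμ hJc hJsum hJ

lemma expec_hatY (z : Bool) (a : Fin d.m) :
    d.expec (fun A S => d.hatY A S z a) = μ z a := by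
  have hmA := mechA_nonempty d hJsum
  have hT := T_pos d hhi
  have hcard : (0 : ℝ) < (d.mechA.card : ℝ) := by exact_mod_cast Finset.card_pos.2 hmA
  rw [expec_eq_of d hmA hT _ (fun _ => μ z a)
    (fun A hA => sum_treatA_hatY d μ hn hlo hhi hμ hJc hA z a),
    Finset.sum_const, nsmul_eq_mul]
  field_simp

lemma expec_hatY_mul (z z' : Bool) (a a' : Fin d.m) :
    d.expec (fun A S => d.hatY A S z a * d.hatY A S z' a')
      = μ z a * μ z' a' +
          (if a = a' then (∑ j, cj d j a z z') / ((d.Jc a : ℝ) * (d.J : ℝ)) else 0) := by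
  have hmA := mechA_nonempty d hJsum
  have hT := T_pos d hhi
  have hcard : (0 : ℝ) < (d.mechA.card : ℝ) := by exact_mod_cast Finset.card_pos.2 hmA
  have hJ0 : (0 : ℝ) < (d.J : ℝ) := by
    have : (2 : ℝ) ≤ (d.J : ℝ) := by exact_mod_cast hJ
    linarith
  have hJc0 : (0 : ℝ) < (d.Jc a : ℝ) := by
    have : (2 : ℝ) ≤ (d.Jc a : ℝ) := by exact_mod_cast hJc a
    linarith
  rw [expec_eq_of d hmA hT _
    (fun A => μ z a * μ z' a' +
      if a = a' then
        (∑ j ∈ Finset.univ.filter (fun j => A j = a), cj d j a z z')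
          / ((d.Jc a : ℝ) * (d.Jc a : ℝ))
      else 0)
    (fun A hA => sum_treatA_hatY_mul d μ hn hlo hhi hμ hJc hA z z' a a')]
  by_cases haa : a = a'
  · subst haa
    simp only [eq_self_iff_true, if_true]
    rw [Finset.sum_add_distrib, Finset.sum_const, nsmul_eq_mul, ← Finset.sum_div]
    have hS := sum_mechA_filter d (fun j => cj d j a z z') a
    set Q := ∑ A ∈ d.mechA, ∑ j ∈ Finset.univ.filter (fun j => A j = a), cj d j a z z' with hQdef
    have hQ : Q = (d.Jc a : ℝ) * (d.mechA.card : ℝ) * (∑ j, cj d j a z z') / (d.J : ℝ) := by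
      field_simp
      linarith [hS]
    rw [hQ]
    field_simp
  · simp only [if_neg haa, add_zero]
    rw [Finset.sum_const, nsmul_eq_mul]
    field_simp

lemma expec_sigBhat (z z' : Bool) (a : Fin d.m) :
    d.expec (fun A S => d.sigBhat A S z z' a) = (∑ j, cj d j a z z') / (d.J : ℝ) := by
  have hmA := mechA_nonempty d hJsum
  have hT := T_pos d hhi
  have hcard : (0 : ℝ) < (d.mechA.card : ℝ) := by exact_mod_cast Finset.card_pos.2 hmA
  have hJ0 : (0 : ℝ) < (d.J : ℝ) := by
    have : (2 : ℝ) ≤ (d.J : ℝ) := by exact_mod_cast hJ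
    linarith
  have hJc0 : (0 : ℝ) < (d.Jc a : ℝ) := by
    have : (2 : ℝ) ≤ (d.Jc a : ℝ) := by exact_mod_cast hJc a
    linarith
  rw [expec_eq_of d hmA hT _
    (fun A => (∑ j ∈ Finset.univ.filter (fun j => A j = a), cj d j a z z') / (d.Jc a : ℝ))
    (fun A hA => sum_treatA_sigBhat d μ hn hlo hhi hμ hJc hA z z' a)]
  rw [← Finset.sum_div]
  have hS := sum_mechA_filter d (fun j => cj d j a z z') a
  set Q := ∑ A ∈ d.mechA, ∑ j ∈ Finset.univ.filter (fun j => A j = a), cj d j a z z' with hQdef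
  have hQ : Q = (d.Jc a : ℝ) * (d.mechA.card : ℝ) * (∑ j, cj d j a z z') / (d.J : ℝ) := by
    field_simp
    linarith [hS]
  rw [hQ]
  field_simp

end Main
end TwoStageDesignAux

end AuxSection

/-- **Unbiasedness of the covariance estimator under constant cluster means
(Theorem 3, second part).** Under the two-stage randomized design with `J_a ≥ 2`
for all mechanisms `a`, if the cluster-level average potential outcomes `Ȳ_j(z,a)`
do not depend on the cluster `j`, then `E[D̂] = D`, where `D = J·cov(Ŷ)` and rows and
columns are indexed by pairs `(a, z)`. -/
theorem Dhat_unbiased_of_const (d : TwoStageDesign)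
    (hJ : 2 ≤ d.J) (hn : ∀ j, 2 ≤ d.n j)
    (hJc : ∀ a, 2 ≤ d.Jc a) (hJsum : ∑ a, d.Jc a = d.J)
    (hn1lo : ∀ j a, 1 ≤ d.n1 j a) (hn1hi : ∀ j a, d.n1 j a ≤ d.n j - 1)
    (hconst : ∀ (j j' : Fin d.J) (z : Bool) (a : Fin d.m), d.Ybarj j z a = d.Ybarj j' z a) :
    ∀ p q : Fin d.m × Bool,
      (if p.1 = q.1 then
          d.expec (fun A S => ((d.J : ℝ) / (d.Jc p.1 : ℝ)) * d.sigBhat A S p.2 q.2 p.1)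
        else 0) =
      (d.J : ℝ) *
        d.cov (fun A S => d.hatY A S p.2 p.1) (fun A S => d.hatY A S q.2 q.1) := by
  classical
  rintro ⟨a, z⟩ ⟨a', z'⟩
  dsimp only
  open TwoStageDesignAux in
  have hmA := mechA_nonempty d hJsum
  have hT := TwoStageDesignAux.T_pos d hn1hi
  have j0 : Fin d.J := ⟨0, by omega⟩
  set μ : Bool → Fin d.m → ℝ := fun z a => d.Ybarj j0 z a with hμdef
  have hμ : ∀ j z a, d.Ybarj j z a = μ z a := fun j z a => hconst j j0 z a
  have hJ0 : (0 : ℝ) < (d.J : ℝ) := by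
    have : (2 : ℝ) ≤ (d.J : ℝ) := by exact_mod_cast hJ
    linarith
  have hJc0 : (0 : ℝ) < (d.Jc a : ℝ) := by
    have : (2 : ℝ) ≤ (d.Jc a : ℝ) := by exact_mod_cast hJc a
    linarith
  rw [TwoStageDesignAux.cov_eq d hmA hT,
    TwoStageDesignAux.expec_hatY d μ hn hn1lo hn1hi hμ hJc hJsum hJ z a,
    TwoStageDesignAux.expec_hatY d μ hn hn1lo hn1hi hμ hJc hJsum hJ z' a',
    TwoStageDesignAux.expec_hatY_mul d μ hn hn1lo hn1hi hμ hJc hJsum hJ z z' a a']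
  by_cases haa : a = a'
  · subst haa
    simp only [eq_self_iff_true, if_true]
    rw [TwoStageDesignAux.expec_mul_left d ((d.J : ℝ) / (d.Jc a : ℝ))
      (fun A S => d.sigBhat A S z z' a),
      TwoStageDesignAux.expec_sigBhat d μ hn hn1lo hn1hi hμ hJc hJsum hJ z z' a]
    have hsimp : μ z a * μ z' a + (∑ j, TwoStageDesignAux.cj d j a z z') / ((d.Jc a : ℝ) * (d.J : ℝ))
        - μ z a * μ z' a = (∑ j, TwoStageDesignAux.cj d j a z z') / ((d.Jc a : ℝ) * (d.J : ℝ)) := by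
      ring
    rw [hsimp]
    ring
  · simp only [if_neg haa, add_zero]
    ring
end
end

section
/- Exact variance of the two-stage design estimator under no interference: consider a two-stage randomized experiment with J ≥ 2 clusters of equal size n ≥ 2, m mechanisms with cluster counts J_1,…,J_m (Σ_a J_a = J), where under mechanism a exactly n p_a units per cluster are treated, with 0 < p_a < 1 and n p_a an integer in [1, n−1]. Suppose there is no interference: each unit has fixed real potential outcomes Y_{ij}(1), Y_{ij}(0) not depending on the mechanism, and the observed outcome is Y_{ij} = Y_{ij}(Z_{ij}). Then the difference-in-means estimator ÂTE = (1/J) Σ_{j=1}^J { (Σ_i Y_{ij} Z_{ij}) / n_{j1} − (Σ_i Y_{ij} (1 − Z_{ij})) / n_{j0} } (where n_{j1} = n p_{A_j} and n_{j0} = n − n_{j1}) has variance exactly equal to ((nJ−1)/(J³(n−1))) [ Σ_{a=1}^m (J_a/(n p_a)) η_w²(1) + Σ_{a=1}^m (J_a/(n(1−p_a))) η_w²(0) − (J/n) τ_w² ], where η_w²(z) = (1/(nJ−1)) Σ_j Σ_i {Y_{ij}(z) − Ȳ_j(z)}², τ_w² = (1/(nJ−1)) Σ_j Σ_i {ATE_{ij}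 − ATE_j}², ATE_{ij} = Y_{ij}(1) − Y_{ij}(0), Ȳ_j(z) = (1/n) Σ_i Y_{ij}(z), and ATE_j = (1/n) Σ_i ATE_{ij}. -/
/-!
STATEMENT 16: exact variance of the difference-in-means estimator under the two-stage
randomized design with equal cluster sizes and no interference.
-/

open scoped BigOperators

noncomputable section

namespace TwoStageNoInterference

/-- Admissible first-stage assignments: mechanism `a` is given to exactly `Jc a`
clusters. -/
def mechA (J m : ℕ) (Jc : Fin m → ℕ) : Finset (Fin J → Fin m) :=
  Finset.univ.filter fun A => ∀ a, (Finset.univ.filter fun j => A j = a).card = Jc a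

/-- Admissible second-stage assignments given `A`: exactly `k (A j)` treated units in
cluster `j` (all clusters have the common size `N`). -/
def treatA (J m N : ℕ) (k : Fin m → ℕ) (A : Fin J → Fin m) :
    Finset (Fin J → Finset (Fin N)) :=
  Finset.univ.filter fun S => ∀ j, (S j).card = k (A j)

/-- Expectation under the two-stage randomization: `A` uniform on the admissible
first-stage assignments; given `A`, the treated sets uniform (independently across
clusters) on the admissible second-stage assignments. -/
def expec (J m N : ℕ) (Jc : Fin m → ℕ) (k : Fin m → ℕ)
    (f : (Fin J → Fin m) → (Fin J → Finset (Fin N)) → ℝ) : ℝ :=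
  ∑ A ∈ mechA J m Jc, ∑ S ∈ treatA J m N k A,
    f A S / (((mechA J m Jc).card : ℝ) * ((treatA J m N k A).card : ℝ))

/-- Variance under the two-stage randomization. -/
def variance (J m N : ℕ) (Jc : Fin m → ℕ) (k : Fin m → ℕ)
    (f : (Fin J → Fin m) → (Fin J → Finset (Fin N)) → ℝ) : ℝ :=
  expec J m N Jc k fun A S => (f A S - expec J m N Jc k f) ^ 2

/-- `Ŷ_j(z)`: average observed outcome among units of cluster `j` assigned to `z`
(no interference: the potential outcomes `Y j i z` do not depend on the mechanism). -/
def hatYj (J N : ℕ) (Y : Fin J → Fin N → Bool → ℝ) (S : Fin J → Finset (Fin N))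
    (z : Bool) (j : Fin J) : ℝ :=
  (∑ i ∈ Finset.univ.filter (fun i => decide (i ∈ S j) = z), Y j i (decide (i ∈ S j))) /
    ((Finset.univ.filter (fun i : Fin N => decide (i ∈ S j) = z)).card : ℝ)

/-- The difference-in-means estimator `ÂTE`. -/
def ATEhat (J N : ℕ) (Y : Fin J → Fin N → Bool → ℝ) (S : Fin J → Finset (Fin N)) : ℝ :=
  (∑ j, (hatYj J N Y S true j - hatYj J N Y S false j)) / (J : ℝ)

/-- `Ȳ_j(z)`: cluster-level average potential outcome. -/
def Ybarj (J N : ℕ) (Y : Fin J → Fin N → Bool → ℝ) (j : Fin J) (z : Bool) : ℝ :=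
  (∑ i, Y j i z) / (N : ℝ)

/-- `η_w²(z)`: within-cluster variance of the potential outcomes. -/
def etaw (J N : ℕ) (Y : Fin J → Fin N → Bool → ℝ) (z : Bool) : ℝ :=
  (∑ j, ∑ i, (Y j i z - Ybarj J N Y j z) ^ 2) / ((N : ℝ) * (J : ℝ) - 1)

/-- `τ_w²`: within-cluster variance of the unit-level treatment effects. -/
def tauw (J N : ℕ) (Y : Fin J → Fin N → Bool → ℝ) : ℝ :=
  (∑ j, ∑ i,
      ((Y j i true - Y j i false) - (Ybarj J N Y j true - Ybarj J N Y j false)) ^ 2) /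
    ((N : ℝ) * (J : ℝ) - 1)

end TwoStageNoInterference



open Finset

noncomputable section
namespace TSAux

variable {N : ℕ}

/-- The sample space of one cluster. -/
def Om (N kk : ℕ) : Finset (Finset (Fin N)) := Finset.powersetCard kk Finset.univ

lemma card_Om (kk : ℕ) : (Om N kk).card = N.choose kk := by
  simp [Om, Finset.card_powersetCard]

lemma Om_nonempty {kk : ℕ} (h : kk ≤ N) : (Om N kk).Nonempty := by
  apply Finset.powersetCard_nonempty.2; simpa using h

lemma mem_Om {kk : ℕ} {T : Finset (Fin N)} : T ∈ Om N kk ↔ T.card = kk := by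
  simp [Om, Finset.mem_powersetCard]

/-- counting is invariant under permutations acting on subsets. -/
lemma card_filter_perm (kk : ℕ) (σ : Equiv.Perm (Fin N))
    (p q : Finset (Fin N) → Prop) [DecidablePred p] [DecidablePred q]
    (h : ∀ T, p T ↔ q (T.image σ)) :
    ((Om N kk).filter p).card = ((Om N kk).filter q).card := by
  refine Finset.card_bij' (fun T _ => T.image σ) (fun T _ => T.image σ.symm) ?_ ?_ ?_ ?_
  · intro T hT
    simp only [Finset.mem_filter, mem_Om] at hT ⊢
    exact ⟨by rw [Finset.card_image_of_injective _ σ.injective]; exact hT.1, (h T).1 hT.2⟩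
  · intro T hT
    simp only [Finset.mem_filter, mem_Om] at hT ⊢
    refine ⟨by rw [Finset.card_image_of_injective _ σ.symm.injective]; exact hT.1, ?_⟩
    rw [h]
    have : (T.image σ.symm).image σ = T := by simp [Finset.image_image]
    rw [this]; exact hT.2
  · intro T _; simp [Finset.image_image]
  · intro T _; simp [Finset.image_image]

lemma swap_mem_image_iff {i i' : Fin N} (T : Finset (Fin N)) :
    i ∈ T ↔ i' ∈ T.image (Equiv.swap i i') := by
  simp only [Finset.mem_image]
  constructor
  · intro hT; exact ⟨i, hT, Equiv.swap_apply_left i i'⟩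
  · rintro ⟨x, hx, hxe⟩
    rw [Equiv.apply_eq_iff_eq_symm_apply, Equiv.symm_swap, Equiv.swap_apply_right] at hxe
    rwa [hxe] at hx

lemma exists_perm_two {i j i' j' : Fin N} (hij : i ≠ j) (hij' : i' ≠ j') :
    ∃ σ : Equiv.Perm (Fin N), σ i = i' ∧ σ j = j' := by
  set σ₁ := Equiv.swap i i' with hσ₁
  have hne : σ₁ j ≠ i' := by
    intro hc
    have : j = σ₁ i' := by
      have := congrArg σ₁ hc
      rwa [Equiv.swap_apply_self] at this
    rw [hσ₁, Equiv.swap_apply_right] at this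
    exact hij this.symm
  refine ⟨σ₁.trans (Equiv.swap (σ₁ j) j'), ?_, ?_⟩
  · simp only [Equiv.trans_apply, hσ₁, Equiv.swap_apply_left]
    exact Equiv.swap_apply_of_ne_of_ne (Ne.symm hne) hij'
  · simp only [Equiv.trans_apply, Equiv.swap_apply_left]

/-- number of `kk`-subsets containing a fixed point, as a card identity. -/
lemma c1_eq (kk : ℕ) (i : Fin N) :
    N * ((Om N kk).filter (fun T => i ∈ T)).card = kk * (Om N kk).card := by
  have hconst : ∀ i' : Fin N, ((Om N kk).filter (fun T => i ∈ T)).card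
      = ((Om N kk).filter (fun T => i' ∈ T)).card := by
    intro i'
    exact card_filter_perm kk (Equiv.swap i i') _ _ (fun T => swap_mem_image_iff T)
  have hsum : ∑ i' : Fin N, ((Om N kk).filter (fun T => i' ∈ T)).card
      = kk * (Om N kk).card := by
    simp_rw [Finset.card_filter]
    rw [Finset.sum_comm]
    have : ∀ T ∈ Om N kk, (∑ i' : Fin N, if i' ∈ T then 1 else 0) = kk := by
      intro T hT
      rw [← Finset.card_filter]
      have : Finset.univ.filter (fun i' : Fin N => i' ∈ T) = T := by
        ext x; simp
      rw [this, mem_Om.1 hT]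
    rw [Finset.sum_congr rfl this, Finset.sum_const, smul_eq_mul, mul_comm]
  calc N * ((Om N kk).filter (fun T => i ∈ T)).card
      = ∑ _i' : Fin N, ((Om N kk).filter (fun T => i ∈ T)).card := by
        rw [Finset.sum_const, Finset.card_univ, Fintype.card_fin, smul_eq_mul]
    _ = ∑ i' : Fin N, ((Om N kk).filter (fun T => i' ∈ T)).card :=
        Finset.sum_congr rfl (fun i' _ => hconst i')
    _ = kk * (Om N kk).card := hsum

lemma pair_mem_image_iff {i j i' j' : Fin N} (σ : Equiv.Perm (Fin N))
    (hi : σ i = i') (hj : σ j = j') (T : Finset (Fin N)) :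
    (i ∈ T ∧ j ∈ T) ↔ (i' ∈ T.image σ ∧ j' ∈ T.image σ) := by
  have key : ∀ (x x' : Fin N), σ x = x' → (x ∈ T ↔ x' ∈ T.image σ) := by
    intro x x' hx
    simp only [Finset.mem_image]
    constructor
    · intro h; exact ⟨x, h, hx⟩
    · rintro ⟨y, hy, hye⟩
      have : y = x := σ.injective (hye.trans hx.symm)
      rwa [this] at hy
  rw [key i i' hi, key j j' hj]

/-- number of `kk`-subsets containing two fixed distinct points. -/
lemma c2_eq (kk : ℕ) {i j : Fin N} (hij : i ≠ j) :
    N * (N - 1) * ((Om N kk).filter (fun T => i ∈ T ∧ j ∈ T)).card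
      = kk * (kk - 1) * (Om N kk).card := by
  have hN : 0 < N := i.pos
  set c := ((Om N kk).filter (fun T => i ∈ T ∧ j ∈ T)).card with hc
  have hconst : ∀ a b : Fin N, a ≠ b →
      ((Om N kk).filter (fun T => a ∈ T ∧ b ∈ T)).card = c := by
    intro a b hab
    obtain ⟨σ, hσa, hσb⟩ := exists_perm_two hab hij
    exact card_filter_perm kk σ _ _ (pair_mem_image_iff σ hσa hσb)
  have hdiag : ∀ a : Fin N,
      N * ((Om N kk).filter (fun T => a ∈ T ∧ a ∈ T)).card = kk * (Om N kk).card := by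
    intro a
    have heq : ((Om N kk).filter (fun T => a ∈ T ∧ a ∈ T))
        = ((Om N kk).filter (fun T => a ∈ T)) := by
      apply Finset.filter_congr; intro T _; simp
    rw [heq]; exact c1_eq kk a
  have h1 : ∀ a : Fin N,
      (∑ b : Fin N, ((Om N kk).filter (fun T => a ∈ T ∧ b ∈ T)).card)
      = ∑ T ∈ Om N kk, (if a ∈ T then T.card else 0) := by
    intro a
    simp_rw [Finset.card_filter]
    rw [Finset.sum_comm]
    apply Finset.sum_congr rfl
    intro T _
    by_cases ha : a ∈ T
    · simp only [ha, true_and, if_true]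
      rw [← Finset.card_filter]
      congr 1
      ext x; simp
    · simp [ha]
  have htot : ∑ a : Fin N, ∑ b : Fin N,
      ((Om N kk).filter (fun T => a ∈ T ∧ b ∈ T)).card = kk ^ 2 * (Om N kk).card := by
    simp_rw [h1]
    rw [Finset.sum_comm]
    have hointer : ∀ T ∈ Om N kk, (∑ a : Fin N, if a ∈ T then T.card else 0) = kk ^ 2 := by
      intro T hT
      rw [Finset.sum_ite_mem, Finset.univ_inter, Finset.sum_const, mem_Om.1 hT,
        smul_eq_mul, sq]
    rw [Finset.sum_congr rfl hointer, Finset.sum_const, smul_eq_mul, mul_comm]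
  have hsplit : ∀ a : Fin N,
      ∑ b : Fin N, ((Om N kk).filter (fun T => a ∈ T ∧ b ∈ T)).card
      = ((Om N kk).filter (fun T => a ∈ T ∧ a ∈ T)).card
        + ∑ b ∈ Finset.univ.erase a, ((Om N kk).filter (fun T => a ∈ T ∧ b ∈ T)).card :=
    fun a => (Finset.add_sum_erase _ _ (Finset.mem_univ a)).symm
  have hoff : ∀ a : Fin N,
      ∑ b ∈ Finset.univ.erase a, ((Om N kk).filter (fun T => a ∈ T ∧ b ∈ T)).card
      = (N - 1) * c := by
    intro a
    rw [Finset.sum_congr rfl (fun b hb => hconst a b (Ne.symm (Finset.ne_of_mem_erase hb))),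
      Finset.sum_const, smul_eq_mul, Finset.card_erase_of_mem (Finset.mem_univ a),
      Finset.card_univ, Fintype.card_fin]
  have key : kk ^ 2 * (Om N kk).card * N
      = kk * (Om N kk).card * N + N * (N - 1) * c * N := by
    have e1 : (∑ a : Fin N, ∑ b : Fin N,
        ((Om N kk).filter (fun T => a ∈ T ∧ b ∈ T)).card) * N
        = (∑ a : Fin N, (N * ((Om N kk).filter (fun T => a ∈ T ∧ a ∈ T)).card
            + (N - 1) * c * N)) := by
      rw [Finset.sum_mul]
      apply Finset.sum_congr rfl
      intro a _
      rw [hsplit a, hoff a, Nat.add_mul]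
      ring
    rw [← htot, e1]
    rw [Finset.sum_add_distrib]
    rw [Finset.sum_congr rfl (fun a _ => hdiag a), Finset.sum_const, Finset.sum_const,
      Finset.card_univ, Fintype.card_fin, smul_eq_mul, smul_eq_mul]
    ring
  have key2 : kk ^ 2 * (Om N kk).card = kk * (Om N kk).card + N * (N - 1) * c :=
    Nat.eq_of_mul_eq_mul_right hN (by rw [Nat.add_mul]; exact key)
  have harith : kk ^ 2 * (Om N kk).card
      = kk * (Om N kk).card + kk * (kk - 1) * (Om N kk).card := by
    cases kk with
    | zero => simp
    | succ n => simp only [Nat.succ_sub_one]; ring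
  omega

lemma sum_mem_eq (kk : ℕ) (f : Fin N → ℝ) :
    ∑ T ∈ Om N kk, ∑ i ∈ T, f i
      = ∑ i : Fin N, (((Om N kk).filter (fun T => i ∈ T)).card : ℝ) * f i := by
  have h1 : ∀ T ∈ Om N kk, ∑ i ∈ T, f i = ∑ i : Fin N, if i ∈ T then f i else 0 := by
    intro T _
    rw [Finset.sum_ite_mem, Finset.univ_inter]
  rw [Finset.sum_congr rfl h1, Finset.sum_comm]
  apply Finset.sum_congr rfl
  intro i _
  rw [← Finset.sum_filter, Finset.sum_const, nsmul_eq_mul]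

lemma c1_eq_real (kk : ℕ) (hN : 0 < N) (i : Fin N) :
    (((Om N kk).filter (fun T => i ∈ T)).card : ℝ)
      = (kk : ℝ) * ((Om N kk).card : ℝ) / (N : ℝ) := by
  have h := c1_eq (N := N) kk i
  have hN' : (N : ℝ) ≠ 0 := Nat.cast_ne_zero.2 hN.ne'
  field_simp
  exact_mod_cast (mul_comm (N : ℕ) _ ▸ h)

lemma c2_eq_real (kk : ℕ) (hkk : 1 ≤ kk) (hN : 2 ≤ N) {i j : Fin N} (hij : i ≠ j) :
    (((Om N kk).filter (fun T => i ∈ T ∧ j ∈ T)).card : ℝ)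
      = (kk : ℝ) * ((kk : ℝ) - 1) * ((Om N kk).card : ℝ)
        / ((N : ℝ) * ((N : ℝ) - 1)) := by
  have h := c2_eq (N := N) kk hij
  have h1 : ((N * (N - 1) * ((Om N kk).filter (fun T => i ∈ T ∧ j ∈ T)).card : ℕ) : ℝ)
      = ((kk * (kk - 1) * (Om N kk).card : ℕ) : ℝ) := congrArg (fun n : ℕ => (n : ℝ)) h
  push_cast [Nat.cast_sub (by omega : 1 ≤ N), Nat.cast_sub hkk] at h1
  have hN0 : (N : ℝ) ≠ 0 := by positivity
  have hN1 : (N : ℝ) - 1 ≠ 0 := by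
    have : (2 : ℝ) ≤ (N : ℝ) := by exact_mod_cast hN
    nlinarith
  field_simp
  linarith [h1]

lemma sum_mem_const (kk : ℕ) (hN : 0 < N) (f : Fin N → ℝ) :
    ∑ T ∈ Om N kk, ∑ i ∈ T, f i
      = (kk : ℝ) / (N : ℝ) * ((Om N kk).card : ℝ) * ∑ i, f i := by
  rw [sum_mem_eq]
  rw [Finset.sum_congr rfl (fun i _ => by rw [c1_eq_real kk hN i]), ← Finset.mul_sum]
  ring

lemma sum_sq_eq (kk : ℕ) (hkk : 1 ≤ kk) (hN : 2 ≤ N) (w : Fin N → ℝ)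
    (hw : ∑ i, w i = 0) :
    ∑ T ∈ Om N kk, (∑ i ∈ T, w i) ^ 2
      = (kk : ℝ) * ((N : ℝ) - (kk : ℝ)) / ((N : ℝ) * ((N : ℝ) - 1))
        * ((Om N kk).card : ℝ) * ∑ i, (w i) ^ 2 := by
  have hN0 : (N : ℝ) ≠ 0 := by positivity
  have hN1 : (N : ℝ) - 1 ≠ 0 := by
    have : (2 : ℝ) ≤ (N : ℝ) := by exact_mod_cast hN
    nlinarith
  -- expand the square as a double sum over univ
  have h1 : ∀ T ∈ Om N kk, (∑ i ∈ T, w i) ^ 2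
      = ∑ i : Fin N, ∑ j : Fin N,
          (if i ∈ T ∧ j ∈ T then w i * w j else 0) := by
    intro T _
    have e1 : ∑ i ∈ T, w i = ∑ i : Fin N, if i ∈ T then w i else 0 := by
      rw [Finset.sum_ite_mem, Finset.univ_inter]
    rw [e1, sq, Finset.sum_mul_sum]
    apply Finset.sum_congr rfl; intro i _
    apply Finset.sum_congr rfl; intro j _
    by_cases hi : i ∈ T <;> by_cases hj : j ∈ T <;> simp [hi, hj]
  rw [Finset.sum_congr rfl h1, Finset.sum_comm]
  have h2 : ∀ i : Fin N, ∑ T ∈ Om N kk, ∑ j : Fin N,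
      (if i ∈ T ∧ j ∈ T then w i * w j else 0)
      = ∑ j : Fin N, (((Om N kk).filter (fun T => i ∈ T ∧ j ∈ T)).card : ℝ)
          * (w i * w j) := by
    intro i
    rw [Finset.sum_comm]
    apply Finset.sum_congr rfl
    intro j _
    rw [← Finset.sum_filter, Finset.sum_const, nsmul_eq_mul]
  rw [Finset.sum_congr rfl (fun i _ => h2 i)]
  -- now split diagonal and off-diagonal
  have h3 : ∀ i : Fin N,
      ∑ j : Fin N, (((Om N kk).filter (fun T => i ∈ T ∧ j ∈ T)).card : ℝ) * (w i * w j)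
      = (kk : ℝ) * ((Om N kk).card : ℝ) / (N : ℝ) * (w i) ^ 2
        - (kk : ℝ) * ((kk : ℝ) - 1) * ((Om N kk).card : ℝ) / ((N : ℝ) * ((N : ℝ) - 1))
          * (w i) ^ 2 := by
    intro i
    rw [← Finset.add_sum_erase _ _ (Finset.mem_univ i)]
    have hdiag : (((Om N kk).filter (fun T => i ∈ T ∧ i ∈ T)).card : ℝ) * (w i * w i)
        = (kk : ℝ) * ((Om N kk).card : ℝ) / (N : ℝ) * (w i) ^ 2 := by
      have heq : ((Om N kk).filter (fun T => i ∈ T ∧ i ∈ T))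
          = ((Om N kk).filter (fun T => i ∈ T)) := by
        apply Finset.filter_congr; intro T _; simp
      rw [heq, c1_eq_real kk (by omega) i]
      ring
    rw [hdiag]
    have hoff : ∑ j ∈ Finset.univ.erase i,
        (((Om N kk).filter (fun T => i ∈ T ∧ j ∈ T)).card : ℝ) * (w i * w j)
        = - ((kk : ℝ) * ((kk : ℝ) - 1) * ((Om N kk).card : ℝ)
            / ((N : ℝ) * ((N : ℝ) - 1)) * (w i) ^ 2) := by
      have e1 : ∀ j ∈ Finset.univ.erase i,
          (((Om N kk).filter (fun T => i ∈ T ∧ j ∈ T)).card : ℝ) * (w i * w j)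
          = (kk : ℝ) * ((kk : ℝ) - 1) * ((Om N kk).card : ℝ)
              / ((N : ℝ) * ((N : ℝ) - 1)) * (w i * w j) := by
        intro j hj
        rw [c2_eq_real kk hkk hN (Ne.symm (Finset.ne_of_mem_erase hj))]
      rw [Finset.sum_congr rfl e1, ← Finset.mul_sum, ← Finset.mul_sum,
        Finset.sum_erase_eq_sub (Finset.mem_univ i), hw]
      ring
    rw [hoff]
    ring
  rw [Finset.sum_congr rfl (fun i _ => h3 i), Finset.sum_sub_distrib,
    ← Finset.mul_sum, ← Finset.mul_sum]
  field_simp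
  ring

/-- within-cluster difference in means. -/
def gfun (N kk : ℕ) (y1 y0 : Fin N → ℝ) (T : Finset (Fin N)) : ℝ :=
  (∑ i ∈ T, y1 i) / (kk : ℝ) - (∑ i ∈ Finset.univ \ T, y0 i) / ((N : ℝ) - (kk : ℝ))

def wfun (N kk : ℕ) (y1 y0 : Fin N → ℝ) (i : Fin N) : ℝ :=
  (y1 i - (∑ i', y1 i') / (N : ℝ)) / (kk : ℝ)
    + (y0 i - (∑ i', y0 i') / (N : ℝ)) / ((N : ℝ) - (kk : ℝ))

def mufun (N : ℕ) (y1 y0 : Fin N → ℝ) : ℝ :=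
  (∑ i, y1 i) / (N : ℝ) - (∑ i, y0 i) / (N : ℝ)

lemma wfun_sum_zero {kk : ℕ} (hN : 0 < N) (y1 y0 : Fin N → ℝ) :
    ∑ i, wfun N kk y1 y0 i = 0 := by
  have hN0 : (N : ℝ) ≠ 0 := by positivity
  simp only [wfun]
  rw [Finset.sum_add_distrib, ← Finset.sum_div, ← Finset.sum_div,
    Finset.sum_sub_distrib, Finset.sum_sub_distrib, Finset.sum_const,
    Finset.card_univ, Fintype.card_fin, nsmul_eq_mul]
  field_simp
  rw [Finset.sum_const, Finset.card_univ, Fintype.card_fin, nsmul_eq_mul]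
  have hc : (N : ℝ) * ((∑ x, y0 x) / (N : ℝ)) = ∑ x, y0 x := by field_simp
  rw [hc]
  ring

lemma gfun_sub_mu {kk : ℕ} (hkk : 1 ≤ kk) (hkN : kk ≤ N - 1) (hN : 2 ≤ N)
    (y1 y0 : Fin N → ℝ) {T : Finset (Fin N)} (hT : T ∈ Om N kk) :
    gfun N kk y1 y0 T - mufun N y1 y0 = ∑ i ∈ T, wfun N kk y1 y0 i := by
  have hcard : T.card = kk := mem_Om.1 hT
  have hN0 : (N : ℝ) ≠ 0 := by positivity
  have hkk0 : (kk : ℝ) ≠ 0 := by positivity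
  have hNk : (kk : ℝ) < (N : ℝ) := by exact_mod_cast (by omega : kk < N)
  have hNk0 : (N : ℝ) - (kk : ℝ) ≠ 0 := by linarith
  have hsdiff : ∑ i ∈ Finset.univ \ T, y0 i = ∑ i, y0 i - ∑ i ∈ T, y0 i :=
    Finset.sum_sdiff_eq_sub (Finset.subset_univ T)
  simp only [gfun, mufun, wfun, hsdiff]
  rw [Finset.sum_add_distrib, ← Finset.sum_div, ← Finset.sum_div]
  simp only [Finset.sum_sub_distrib, Finset.sum_const, hcard, nsmul_eq_mul]
  field_simp
  ring

lemma cluster_mean {kk : ℕ} (hkk : 1 ≤ kk) (hkN : kk ≤ N - 1) (hN : 2 ≤ N)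
    (y1 y0 : Fin N → ℝ) :
    ∑ T ∈ Om N kk, gfun N kk y1 y0 T
      = ((Om N kk).card : ℝ) * mufun N y1 y0 := by
  have h0 : ∑ T ∈ Om N kk, (gfun N kk y1 y0 T - mufun N y1 y0) = 0 := by
    rw [Finset.sum_congr rfl (fun T hT => gfun_sub_mu hkk hkN hN y1 y0 hT),
      sum_mem_const kk (by omega) _, wfun_sum_zero (by omega) y1 y0]
    ring
  rw [Finset.sum_sub_distrib, Finset.sum_const, nsmul_eq_mul] at h0
  linarith [h0]

lemma cluster_var {kk : ℕ} (hkk : 1 ≤ kk) (hkN : kk ≤ N - 1) (hN : 2 ≤ N)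
    (y1 y0 : Fin N → ℝ) :
    ∑ T ∈ Om N kk, (gfun N kk y1 y0 T - mufun N y1 y0) ^ 2
      = ((Om N kk).card : ℝ)
        * ((kk : ℝ) * ((N : ℝ) - (kk : ℝ)) / ((N : ℝ) * ((N : ℝ) - 1))
          * ∑ i, (wfun N kk y1 y0 i) ^ 2) := by
  rw [Finset.sum_congr rfl
    (fun T hT => by rw [gfun_sub_mu hkk hkN hN y1 y0 hT]),
    sum_sq_eq kk hkk hN _ (wfun_sum_zero (by omega) y1 y0)]
  ring

section Pi
variable {J : ℕ} {κ : Type*} [DecidableEq κ]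

lemma sum_pi_single (t : Fin J → Finset κ) (j0 : Fin J) (D : κ → ℝ) :
    ∑ S ∈ Fintype.piFinset t, D (S j0)
      = (∑ T ∈ t j0, D T) * ∏ l ∈ Finset.univ.erase j0, ((t l).card : ℝ) := by
  have h1 : ∀ S : Fin J → κ, D (S j0) = ∏ l, (if l = j0 then D (S l) else 1) := by
    intro S
    rw [Finset.prod_ite_eq' Finset.univ j0 (fun l => D (S l))]
    simp
  rw [Finset.sum_congr rfl (fun S _ => h1 S),
    ← Finset.prod_univ_sum t (fun l T => if l = j0 then D T else 1),
    ← Finset.mul_prod_erase _ _ (Finset.mem_univ j0)]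
  congr 1
  · simp
  · apply Finset.prod_congr rfl
    intro l hl
    rw [Finset.sum_congr rfl (fun T _ => if_neg (Finset.ne_of_mem_erase hl)),
      Finset.sum_const, nsmul_eq_mul, mul_one]

lemma sum_pi_pair_zero (t : Fin J → Finset κ) (D : Fin J → κ → ℝ) (j j' : Fin J)
    (hne : j ≠ j') (hD : ∑ T ∈ t j, D j T = 0) :
    ∑ S ∈ Fintype.piFinset t, D j (S j) * D j' (S j') = 0 := by
  have h1 : ∀ S : Fin J → κ, D j (S j) * D j' (S j')
      = ∏ l, ((if l = j then D j (S l) else 1) * (if l = j' then D j' (S l) else 1)) := by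
    intro S
    rw [Finset.prod_mul_distrib, Finset.prod_ite_eq' Finset.univ j (fun l => D j (S l)),
      Finset.prod_ite_eq' Finset.univ j' (fun l => D j' (S l))]
    simp
  rw [Finset.sum_congr rfl (fun S _ => h1 S),
    ← Finset.prod_univ_sum t
      (fun l T => (if l = j then D j T else 1) * (if l = j' then D j' T else 1))]
  apply Finset.prod_eq_zero (Finset.mem_univ j)
  have h2 : ∀ T ∈ t j,
      (if j = j then D j T else 1) * (if j = j' then D j' T else 1) = D j T := by
    intro T _
    rw [if_pos rfl, if_neg hne, mul_one]
  rw [Finset.sum_congr rfl h2, hD]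

lemma sum_pi_sq (t : Fin J → Finset κ) (D : Fin J → κ → ℝ)
    (hD : ∀ j, ∑ T ∈ t j, D j T = 0) :
    ∑ S ∈ Fintype.piFinset t, (∑ j, D j (S j)) ^ 2
      = ∑ j, (∑ T ∈ t j, (D j T) ^ 2)
          * ∏ l ∈ Finset.univ.erase j, ((t l).card : ℝ) := by
  have h1 : ∀ S : Fin J → κ, (∑ j, D j (S j)) ^ 2
      = ∑ j, ∑ j', D j (S j) * D j' (S j') := by
    intro S
    rw [sq, Finset.sum_mul_sum]
  rw [Finset.sum_congr rfl (fun S _ => h1 S), Finset.sum_comm]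
  apply Finset.sum_congr rfl
  intro j _
  rw [Finset.sum_comm]
  have hz : ∀ j' ∈ (Finset.univ : Finset (Fin J)), j' ≠ j →
      ∑ S ∈ Fintype.piFinset t, D j (S j) * D j' (S j') = 0 := by
    intro j' _ hne
    exact sum_pi_pair_zero t D j j' (Ne.symm hne) (hD j)
  rw [Finset.sum_eq_single j hz (by simp)]
  have h3 : ∀ S : Fin J → κ, D j (S j) * D j (S j) = (fun T => (D j T) ^ 2) (S j) := by
    intro S; simp [sq]
  rw [Finset.sum_congr rfl (fun S _ => h3 S), sum_pi_single t j (fun T => (D j T) ^ 2)]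

end Pi

section Mech
open TwoStageNoInterference
variable {J m : ℕ} {Jc : Fin m → ℕ}

lemma mem_mechA {A : Fin J → Fin m} :
    A ∈ mechA J m Jc ↔ ∀ a, (Finset.univ.filter fun j => A j = a).card = Jc a := by
  simp [mechA]

lemma comp_perm_mem_mechA (σ : Equiv.Perm (Fin J)) {A : Fin J → Fin m}
    (hA : A ∈ mechA J m Jc) : (A ∘ σ) ∈ mechA J m Jc := by
  rw [mem_mechA] at hA ⊢
  intro a
  rw [← hA a]
  apply Finset.card_bij' (fun j _ => σ j) (fun j _ => σ.symm j)
  · intro j hj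
    simp only [Finset.mem_filter, Finset.mem_univ, true_and] at hj ⊢
    exact hj
  · intro j hj
    simp only [Finset.mem_filter, Finset.mem_univ, true_and, Function.comp] at hj ⊢
    simpa using hj
  · intro j _; simp
  · intro j _; simp

lemma cnt_eq (j : Fin J) (a : Fin m) :
    J * ((mechA J m Jc).filter (fun A => A j = a)).card
      = Jc a * (mechA J m Jc).card := by
  have hconst : ∀ j' : Fin J, ((mechA J m Jc).filter (fun A => A j = a)).card
      = ((mechA J m Jc).filter (fun A => A j' = a)).card := by
    intro j'
    apply Finset.card_bij' (fun A _ => A ∘ Equiv.swap j j') (fun A _ => A ∘ Equiv.swap j j')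
    · intro A hA
      rw [Finset.mem_filter] at hA ⊢
      refine ⟨comp_perm_mem_mechA _ hA.1, ?_⟩
      simpa [Function.comp, Equiv.swap_apply_right] using hA.2
    · intro A hA
      rw [Finset.mem_filter] at hA ⊢
      refine ⟨comp_perm_mem_mechA _ hA.1, ?_⟩
      simpa [Function.comp, Equiv.swap_apply_left] using hA.2
    · intro A _; ext x; simp [Function.comp, Equiv.swap_apply_self]
    · intro A _; ext x; simp [Function.comp, Equiv.swap_apply_self]
  have hsum : ∑ j' : Fin J, ((mechA J m Jc).filter (fun A => A j' = a)).card
      = Jc a * (mechA J m Jc).card := by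
    simp_rw [Finset.card_filter]
    rw [Finset.sum_comm]
    have h1 : ∀ A ∈ mechA J m Jc, (∑ j' : Fin J, if A j' = a then 1 else 0) = Jc a := by
      intro A hA
      rw [← Finset.card_filter]
      exact mem_mechA.1 hA a
    rw [Finset.sum_congr rfl h1, Finset.sum_const, smul_eq_mul, mul_comm]
  calc J * ((mechA J m Jc).filter (fun A => A j = a)).card
      = ∑ _j' : Fin J, ((mechA J m Jc).filter (fun A => A j = a)).card := by
        rw [Finset.sum_const, Finset.card_univ, Fintype.card_fin, smul_eq_mul]
    _ = ∑ j' : Fin J, ((mechA J m Jc).filter (fun A => A j' = a)).card :=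
        Finset.sum_congr rfl (fun j' _ => hconst j')
    _ = Jc a * (mechA J m Jc).card := hsum

lemma mechA_nonempty (hJsum : ∑ a, Jc a = J) : (mechA J m Jc).Nonempty := by
  have hcard : Fintype.card (Σ a : Fin m, Fin (Jc a)) = Fintype.card (Fin J) := by
    simp [hJsum]
  let e : (Σ a : Fin m, Fin (Jc a)) ≃ Fin J := Fintype.equivOfCardEq hcard
  refine ⟨fun j => (e.symm j).1, ?_⟩
  rw [mem_mechA]
  intro a
  have h1 : (Finset.univ.filter fun j => (e.symm j).1 = a).card
      = (Finset.univ.filter fun x : Σ a', Fin (Jc a') => x.1 = a).card := by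
    apply Finset.card_bij' (fun j _ => e.symm j) (fun x _ => e x)
    · intro j hj
      simp only [Finset.mem_filter, Finset.mem_univ, true_and] at hj ⊢
      exact hj
    · intro x hx
      simp only [Finset.mem_filter, Finset.mem_univ, true_and] at hx ⊢
      simpa using hx
    · intro j _; simp
    · intro x _; simp
  rw [h1]
  have h2 : (Finset.univ.filter fun x : Σ a', Fin (Jc a') => x.1 = a)
      = Finset.univ.map ⟨fun b : Fin (Jc a) => (⟨a, b⟩ : Σ a', Fin (Jc a')),
          fun b b' h => by simpa using h⟩ := by
    ext x
    rcases x with ⟨a', b⟩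
    simp only [Finset.mem_filter, Finset.mem_univ, true_and, Finset.mem_map,
      Function.Embedding.coeFn_mk]
    constructor
    · rintro rfl; exact ⟨b, rfl⟩
    · rintro ⟨b', hb⟩
      cases hb
      rfl
  rw [h2, Finset.card_map, Finset.card_univ, Fintype.card_fin]

end Mech

section Treat
open TwoStageNoInterference

lemma treatA_eq (J m N : ℕ) (k : Fin m → ℕ) (A : Fin J → Fin m) :
    treatA J m N k A = Fintype.piFinset (fun j => Om N (k (A j))) := by
  ext S
  simp [treatA, Fintype.mem_piFinset, mem_Om]

lemma card_treatA (J m N : ℕ) (k : Fin m → ℕ) (A : Fin J → Fin m) :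
    ((treatA J m N k A).card : ℝ) = ∏ j, ((Om N (k (A j))).card : ℝ) := by
  rw [treatA_eq, Fintype.card_piFinset]
  push_cast
  rfl

end Treat

lemma wsq_id (c1 c0 kkR NR : ℝ) (hk : kkR ≠ 0) (hNk : NR - kkR ≠ 0) (hN : NR ≠ 0)
    (hN1 : NR - 1 ≠ 0) :
    kkR * (NR - kkR) / (NR * (NR - 1)) * (c1 / kkR + c0 / (NR - kkR)) ^ 2
      = (c1 ^ 2 / kkR + c0 ^ 2 / (NR - kkR) - (c1 - c0) ^ 2 / NR) / (NR - 1) := by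
  field_simp
  ring

lemma v_closed {N : ℕ} (kk : ℕ) (hkk : 1 ≤ kk) (hkN : kk ≤ N - 1) (hN : 2 ≤ N)
    (y1 y0 : Fin N → ℝ) :
    (kk : ℝ) * ((N : ℝ) - (kk : ℝ)) / ((N : ℝ) * ((N : ℝ) - 1))
        * ∑ i, (wfun N kk y1 y0 i) ^ 2
      = ((∑ i, (y1 i - (∑ i', y1 i') / (N : ℝ)) ^ 2) / (kk : ℝ)
          + (∑ i, (y0 i - (∑ i', y0 i') / (N : ℝ)) ^ 2) / ((N : ℝ) - (kk : ℝ))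
          - (∑ i, ((y1 i - y0 i)
              - ((∑ i', y1 i') / (N : ℝ) - (∑ i', y0 i') / (N : ℝ))) ^ 2) / (N : ℝ))
        / ((N : ℝ) - 1) := by
  have hk0 : (kk : ℝ) ≠ 0 := by positivity
  have hNk : (kk : ℝ) < (N : ℝ) := by exact_mod_cast (by omega : kk < N)
  have hNk0 : (N : ℝ) - (kk : ℝ) ≠ 0 := by linarith
  have hN0 : (N : ℝ) ≠ 0 := by positivity
  have hN1 : (N : ℝ) - 1 ≠ 0 := by
    have : (2 : ℝ) ≤ (N : ℝ) := by exact_mod_cast hN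
    nlinarith
  have key : ∀ i : Fin N, (kk : ℝ) * ((N : ℝ) - (kk : ℝ)) / ((N : ℝ) * ((N : ℝ) - 1))
        * (wfun N kk y1 y0 i) ^ 2
      = ((y1 i - (∑ i', y1 i') / (N : ℝ)) ^ 2 / (kk : ℝ)
          + (y0 i - (∑ i', y0 i') / (N : ℝ)) ^ 2 / ((N : ℝ) - (kk : ℝ))
          - ((y1 i - y0 i)
              - ((∑ i', y1 i') / (N : ℝ) - (∑ i', y0 i') / (N : ℝ))) ^ 2 / (N : ℝ))
        / ((N : ℝ) - 1) := by
    intro i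
    have h := wsq_id (y1 i - (∑ i', y1 i') / (N : ℝ)) (y0 i - (∑ i', y0 i') / (N : ℝ))
      (kk : ℝ) (N : ℝ) hk0 hNk0 hN0 hN1
    have e : (y1 i - (∑ i', y1 i') / (N : ℝ)) - (y0 i - (∑ i', y0 i') / (N : ℝ))
        = (y1 i - y0 i) - ((∑ i', y1 i') / (N : ℝ) - (∑ i', y0 i') / (N : ℝ)) := by ring
    rw [wfun, h, e]
  rw [Finset.mul_sum, Finset.sum_congr rfl (fun i _ => key i), ← Finset.sum_div]
  congr 1
  rw [Finset.sum_sub_distrib, Finset.sum_add_distrib, ← Finset.sum_div, ← Finset.sum_div,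
    ← Finset.sum_div]
end TSAux


open TwoStageNoInterference

/-- **Exact variance of the two-stage design estimator under no interference.** With
`J ≥ 2` clusters of common size `N ≥ 2`, `Jc a` clusters per mechanism, and `N·p_a`
(an integer between `1` and `N−1`) treated units per cluster under mechanism `a`, the
difference-in-means estimator has variance
`((NJ−1)/(J³(N−1))) [∑_a (J_a/(N p_a)) η_w²(1) + ∑_a (J_a/(N(1−p_a))) η_w²(0)
 − (J/N) τ_w²]`. -/
theorem var_ATEhat_two_stage (J m N : ℕ) (Jc : Fin m → ℕ) (k : Fin m → ℕ)
    (p : Fin m → ℝ) (Y : Fin J → Fin N → Bool → ℝ)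
    (hJ : 2 ≤ J) (hN : 2 ≤ N)
    (hJc : ∀ a, 1 ≤ Jc a) (hJsum : ∑ a, Jc a = J)
    (hp0 : ∀ a, 0 < p a) (hp1 : ∀ a, p a < 1)
    (hk : ∀ a, (k a : ℝ) = (N : ℝ) * p a)
    (hk1 : ∀ a, 1 ≤ k a) (hk2 : ∀ a, k a ≤ N - 1) :
    variance J m N Jc k (fun _ S => ATEhat J N Y S) =
      (((N : ℝ) * (J : ℝ) - 1) / ((J : ℝ) ^ 3 * ((N : ℝ) - 1))) *
        ((∑ a, ((Jc a : ℝ) / ((N : ℝ) * p a)) * etaw J N Y true) +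
          (∑ a, ((Jc a : ℝ) / ((N : ℝ) * (1 - p a))) * etaw J N Y false) -
          ((J : ℝ) / (N : ℝ)) * tauw J N Y) := by
  classical
  have hkN : ∀ a, k a ≤ N := fun a => by have := hk2 a; omega
  have hJ0 : (J : ℝ) ≠ 0 := by positivity
  have hN0 : (N : ℝ) ≠ 0 := by positivity
  have hJ2 : (2 : ℝ) ≤ (J : ℝ) := by exact_mod_cast hJ
  have hN2 : (2 : ℝ) ≤ (N : ℝ) := by exact_mod_cast hN
  have hN1 : (N : ℝ) - 1 ≠ 0 := by nlinarith
  have hNJ1 : (N : ℝ) * (J : ℝ) - 1 ≠ 0 := by nlinarith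
  have hcardA_pos : 0 < (mechA J m Jc).card :=
    Finset.card_pos.2 (TSAux.mechA_nonempty hJsum)
  have hcA : ((mechA J m Jc).card : ℝ) ≠ 0 := Nat.cast_ne_zero.2 hcardA_pos.ne'
  have hOmpos : ∀ a : Fin m, 0 < ((TSAux.Om N (k a)).card) := fun a =>
    Finset.card_pos.2 (TSAux.Om_nonempty (hkN a))
  have hcS : ∀ A : Fin J → Fin m, ((treatA J m N k A).card : ℝ) ≠ 0 := by
    intro A
    rw [TSAux.card_treatA]
    apply ne_of_gt
    apply Finset.prod_pos
    intro j _
    exact_mod_cast hOmpos (A j)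
  set G : Fin J → Fin m → Finset (Fin N) → ℝ :=
    fun j a T => TSAux.gfun N (k a) (fun i => Y j i true) (fun i => Y j i false) T with hGdef
  set μ : Fin J → ℝ :=
    fun j => TSAux.mufun N (fun i => Y j i true) (fun i => Y j i false) with hμdef
  set v : Fin J → Fin m → ℝ := fun j a =>
    (k a : ℝ) * ((N : ℝ) - (k a : ℝ)) / ((N : ℝ) * ((N : ℝ) - 1))
      * ∑ i, (TSAux.wfun N (k a) (fun i => Y j i true) (fun i => Y j i false) i) ^ 2 with hvdef
  -- Step A: rewrite the estimator
  have hATE : ∀ A : Fin J → Fin m, ∀ S ∈ treatA J m N k A,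
      ATEhat J N Y S = (∑ j, G j (A j) (S j)) / (J : ℝ) := by
    intro A S hS
    have hScard : ∀ j, (S j).card = k (A j) := by
      simp only [treatA, Finset.mem_filter] at hS
      exact hS.2
    unfold ATEhat
    congr 1
    apply Finset.sum_congr rfl
    intro j _
    have h1set : Finset.univ.filter (fun i : Fin N => decide (i ∈ S j) = true) = S j := by
      ext i; simp
    have h0set : Finset.univ.filter (fun i : Fin N => decide (i ∈ S j) = false)
        = Finset.univ \ S j := by
      ext i; simp
    have h1 : hatYj J N Y S true j = (∑ i ∈ S j, Y j i true) / ((k (A j)) : ℝ) := by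
      unfold hatYj
      rw [h1set, hScard j]
      congr 1
      apply Finset.sum_congr rfl
      intro i hi
      rw [decide_eq_true hi]
    have h0 : hatYj J N Y S false j
        = (∑ i ∈ Finset.univ \ S j, Y j i false) / ((N : ℝ) - (k (A j) : ℝ)) := by
      unfold hatYj
      rw [h0set]
      have hcard : (((Finset.univ \ S j).card : ℕ) : ℝ) = (N : ℝ) - (k (A j) : ℝ) := by
        rw [Finset.card_sdiff_of_subset (Finset.subset_univ _), Finset.card_univ, Fintype.card_fin,
          hScard j, Nat.cast_sub (hkN (A j))]
      rw [hcard]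
      congr 1
      apply Finset.sum_congr rfl
      intro i hi
      rw [decide_eq_false (Finset.mem_sdiff.1 hi).2]
    rw [h1, h0]
    simp only [hGdef, TSAux.gfun]
  have hmeanj : ∀ (j : Fin J) (a : Fin m),
      ∑ T ∈ TSAux.Om N (k a), G j a T = ((TSAux.Om N (k a)).card : ℝ) * μ j := by
    intro j a
    simp only [hGdef, hμdef]
    exact TSAux.cluster_mean (hk1 a) (hk2 a) hN _ _
  have hcent : ∀ (j : Fin J) (a : Fin m),
      ∑ T ∈ TSAux.Om N (k a), (G j a T - μ j) = 0 := by
    intro j a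
    rw [Finset.sum_sub_distrib, hmeanj j a, Finset.sum_const, nsmul_eq_mul]
    ring
  have hvarj : ∀ (j : Fin J) (a : Fin m),
      ∑ T ∈ TSAux.Om N (k a), (G j a T - μ j) ^ 2
        = ((TSAux.Om N (k a)).card : ℝ) * v j a := by
    intro j a
    simp only [hGdef, hμdef, hvdef]
    exact TSAux.cluster_var (hk1 a) (hk2 a) hN _ _
  have hsum1 : ∀ A : Fin J → Fin m, ∑ S ∈ treatA J m N k A, ATEhat J N Y S
      = ((treatA J m N k A).card : ℝ) * ((∑ j, μ j) / (J : ℝ)) := by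
    intro A
    rw [Finset.sum_congr rfl (hATE A), ← Finset.sum_div, TSAux.card_treatA,
      TSAux.treatA_eq, Finset.sum_comm]
    have hper : ∀ j : Fin J,
        ∑ S ∈ Fintype.piFinset (fun l => TSAux.Om N (k (A l))), G j (A j) (S j)
        = (∏ l, ((TSAux.Om N (k (A l))).card : ℝ)) * μ j := by
      intro j
      rw [TSAux.sum_pi_single (fun l => TSAux.Om N (k (A l))) j (G j (A j)), hmeanj j (A j),
        ← Finset.mul_prod_erase Finset.univ (fun l => ((TSAux.Om N (k (A l))).card : ℝ))
          (Finset.mem_univ j)]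
      ring
    rw [Finset.sum_congr rfl (fun j _ => hper j), ← Finset.mul_sum]
    ring
  have hsum2 : ∀ A : Fin J → Fin m,
      ∑ S ∈ treatA J m N k A, (ATEhat J N Y S - (∑ j, μ j) / (J : ℝ)) ^ 2
      = ((treatA J m N k A).card : ℝ) * ((∑ j, v j (A j)) / (J : ℝ) ^ 2) := by
    intro A
    have h1 : ∀ S ∈ treatA J m N k A, (ATEhat J N Y S - (∑ j, μ j) / (J : ℝ)) ^ 2
        = (∑ j, (G j (A j) (S j) - μ j)) ^ 2 / (J : ℝ) ^ 2 := by
      intro S hS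
      rw [hATE A S hS, div_sub_div_same, div_pow, Finset.sum_sub_distrib]
    rw [Finset.sum_congr rfl h1, ← Finset.sum_div, TSAux.card_treatA, TSAux.treatA_eq,
      TSAux.sum_pi_sq (fun l => TSAux.Om N (k (A l))) (fun j T => G j (A j) T - μ j)
        (fun j => hcent j (A j))]
    have hper : ∀ j : Fin J,
        (∑ T ∈ TSAux.Om N (k (A j)), (G j (A j) T - μ j) ^ 2)
            * ∏ l ∈ Finset.univ.erase j, ((TSAux.Om N (k (A l))).card : ℝ)
        = (∏ l, ((TSAux.Om N (k (A l))).card : ℝ)) * v j (A j) := by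
      intro j
      rw [hvarj j (A j),
        ← Finset.mul_prod_erase Finset.univ (fun l => ((TSAux.Om N (k (A l))).card : ℝ))
          (Finset.mem_univ j)]
      ring
    rw [Finset.sum_congr rfl (fun j _ => hper j), ← Finset.mul_sum]
    ring
  have hEf : expec J m N Jc k (fun _ S => ATEhat J N Y S) = (∑ j, μ j) / (J : ℝ) := by
    simp only [expec]
    have h1 : ∀ A ∈ mechA J m Jc,
        (∑ S ∈ treatA J m N k A, ATEhat J N Y S
          / (((mechA J m Jc).card : ℝ) * ((treatA J m N k A).card : ℝ)))
        = ((∑ j, μ j) / (J : ℝ)) / ((mechA J m Jc).card : ℝ) := by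
      intro A _
      rw [← Finset.sum_div, hsum1 A, mul_comm (((mechA J m Jc).card : ℝ)) _,
        mul_div_mul_left _ _ (hcS A)]
    rw [Finset.sum_congr rfl h1, Finset.sum_const, nsmul_eq_mul, mul_comm,
      div_mul_cancel₀ _ hcA]
  simp only [variance]
  rw [hEf]
  simp only [expec]
  have h2 : ∀ A ∈ mechA J m Jc,
      (∑ S ∈ treatA J m N k A, (ATEhat J N Y S - (∑ j, μ j) / (J : ℝ)) ^ 2
        / (((mechA J m Jc).card : ℝ) * ((treatA J m N k A).card : ℝ)))
      = (∑ j, v j (A j)) / ((J : ℝ) ^ 2 * ((mechA J m Jc).card : ℝ)) := by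
    intro A _
    rw [← Finset.sum_div, hsum2 A, mul_comm (((mechA J m Jc).card : ℝ)) _,
      mul_div_mul_left _ _ (hcS A), div_div]
  rw [Finset.sum_congr rfl h2, ← Finset.sum_div]
  have h3 : ∑ A ∈ mechA J m Jc, ∑ j, v j (A j)
      = ∑ j, ∑ a, (((mechA J m Jc).filter (fun A => A j = a)).card : ℝ) * v j a := by
    rw [Finset.sum_comm]
    apply Finset.sum_congr rfl
    intro j _
    have h4 : ∀ A ∈ mechA J m Jc, v j (A j) = ∑ a, if A j = a then v j a else 0 := by
      intro A _
      rw [Finset.sum_ite_eq Finset.univ (A j) (fun a => v j a)]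
      simp
    rw [Finset.sum_congr rfl h4, Finset.sum_comm]
    apply Finset.sum_congr rfl
    intro a _
    rw [← Finset.sum_filter, Finset.sum_const, nsmul_eq_mul]
  rw [h3]
  have h5 : ∀ (j : Fin J) (a : Fin m),
      (((mechA J m Jc).filter (fun A => A j = a)).card : ℝ)
      = (Jc a : ℝ) * ((mechA J m Jc).card : ℝ) / (J : ℝ) := by
    intro j a
    have hnat := TSAux.cnt_eq (Jc := Jc) j a
    have hc : ((J : ℝ)) * (((mechA J m Jc).filter (fun A => A j = a)).card : ℝ)
        = (Jc a : ℝ) * ((mechA J m Jc).card : ℝ) := by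
      exact_mod_cast congrArg (fun n : ℕ => (n : ℝ)) hnat
    field_simp
    linarith [hc]
  rw [Finset.sum_congr rfl (fun j (_ : j ∈ (Finset.univ : Finset (Fin J))) =>
    Finset.sum_congr rfl (fun a (_ : a ∈ (Finset.univ : Finset (Fin m))) => by rw [h5 j a]))]
  -- closed form of the within-cluster variance
  have hvval : ∀ (j : Fin J) (a : Fin m), v j a
      = ((∑ i, (Y j i true - Ybarj J N Y j true) ^ 2) / (k a : ℝ)
          + (∑ i, (Y j i false - Ybarj J N Y j false) ^ 2) / ((N : ℝ) - (k a : ℝ))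
          - (∑ i, ((Y j i true - Y j i false)
              - (Ybarj J N Y j true - Ybarj J N Y j false)) ^ 2) / (N : ℝ))
        / ((N : ℝ) - 1) := by
    intro j a
    have h := TSAux.v_closed (k a) (hk1 a) (hk2 a) hN
      (fun i => Y j i true) (fun i => Y j i false)
    simp only [hvdef]
    rw [h]
    simp only [Ybarj]
  -- reduce LHS to a clean double sum
  have hLHS : (∑ j, ∑ a, ((Jc a : ℝ) * ((mechA J m Jc).card : ℝ) / (J : ℝ)) * v j a)
        / ((J : ℝ) ^ 2 * ((mechA J m Jc).card : ℝ))
      = ∑ a, ∑ j, (Jc a : ℝ) * v j a / (J : ℝ) ^ 3 := by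
    rw [Finset.sum_div]
    rw [Finset.sum_congr rfl (fun j (_ : j ∈ (Finset.univ : Finset (Fin J))) =>
      Finset.sum_div Finset.univ _ ((J : ℝ) ^ 2 * ((mechA J m Jc).card : ℝ)))]
    rw [Finset.sum_comm]
    apply Finset.sum_congr rfl
    intro a _
    apply Finset.sum_congr rfl
    intro j _
    field_simp
  rw [hLHS]
  -- per-term rewriting
  have hterm : ∀ (a : Fin m) (j : Fin J), (Jc a : ℝ) * v j a / (J : ℝ) ^ 3
      = (((N : ℝ) * (J : ℝ) - 1) / ((J : ℝ) ^ 3 * ((N : ℝ) - 1)))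
        * ((Jc a : ℝ) / ((N : ℝ) * p a)
            * ((∑ i, (Y j i true - Ybarj J N Y j true) ^ 2) / ((N : ℝ) * (J : ℝ) - 1))
          + (Jc a : ℝ) / ((N : ℝ) * (1 - p a))
            * ((∑ i, (Y j i false - Ybarj J N Y j false) ^ 2) / ((N : ℝ) * (J : ℝ) - 1))
          - (Jc a : ℝ) / (N : ℝ)
            * ((∑ i, ((Y j i true - Y j i false)
                - (Ybarj J N Y j true - Ybarj J N Y j false)) ^ 2)
              / ((N : ℝ) * (J : ℝ) - 1))) := by
    intro a j
    have hka : ((N : ℝ) * p a) = (k a : ℝ) := (hk a).symm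
    have hka' : ((N : ℝ) * (1 - p a)) = (N : ℝ) - (k a : ℝ) := by
      rw [← hka]; ring
    have hka0 : (k a : ℝ) ≠ 0 := by
      have : 0 < k a := hk1 a
      positivity
    have hNka : (N : ℝ) - (k a : ℝ) ≠ 0 := by
      have : (k a : ℝ) < (N : ℝ) := by
        exact_mod_cast (by have := hk2 a; omega : k a < N)
      linarith
    rw [hvval j a, hka, hka']
    field_simp
  rw [Finset.sum_congr rfl (fun a (_ : a ∈ (Finset.univ : Finset (Fin m))) =>
    Finset.sum_congr rfl (fun j (_ : j ∈ (Finset.univ : Finset (Fin J))) => hterm a j))]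
  -- assemble the right-hand side
  simp only [etaw, tauw]
  have hJsumR : (∑ a, (Jc a : ℝ)) = (J : ℝ) := by exact_mod_cast hJsum
  set C : ℝ := ((N : ℝ) * (J : ℝ) - 1) / ((J : ℝ) ^ 3 * ((N : ℝ) - 1)) with hCdef
  set D : ℝ := (N : ℝ) * (J : ℝ) - 1 with hDdef
  have hpiece : ∀ (c : Fin m → ℝ) (s : Fin J → ℝ),
      (∑ a, ∑ j, C * (c a * (s j / D))) = C * ((∑ a, c a) * ((∑ j, s j) / D)) := by
    intro c s
    have hinner : ∀ a : Fin m, (∑ j, C * (c a * (s j / D)))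
        = c a * (C / D * (∑ j, s j)) := by
      intro a
      have h6 : ∀ j : Fin J, C * (c a * (s j / D)) = (C * c a / D) * s j := by
        intro j; ring
      rw [Finset.sum_congr rfl (fun j _ => h6 j), ← Finset.mul_sum]
      ring
    rw [Finset.sum_congr rfl (fun a _ => hinner a), ← Finset.sum_mul]
    ring
  have hsplit : ∀ (a : Fin m) (j : Fin J),
      C * ((Jc a : ℝ) / ((N : ℝ) * p a)
            * ((∑ i, (Y j i true - Ybarj J N Y j true) ^ 2) / D)
          + (Jc a : ℝ) / ((N : ℝ) * (1 - p a))
            * ((∑ i, (Y j i false - Ybarj J N Y j false) ^ 2) / D)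
          - (Jc a : ℝ) / (N : ℝ)
            * ((∑ i, ((Y j i true - Y j i false)
                - (Ybarj J N Y j true - Ybarj J N Y j false)) ^ 2) / D))
      = C * ((Jc a : ℝ) / ((N : ℝ) * p a)
            * ((∑ i, (Y j i true - Ybarj J N Y j true) ^ 2) / D))
        + C * ((Jc a : ℝ) / ((N : ℝ) * (1 - p a))
            * ((∑ i, (Y j i false - Ybarj J N Y j false) ^ 2) / D))
        - C * ((Jc a : ℝ) / (N : ℝ)
            * ((∑ i, ((Y j i true - Y j i false)
                - (Ybarj J N Y j true - Ybarj J N Y j false)) ^ 2) / D)) := by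
    intro a j
    ring
  rw [Finset.sum_congr rfl (fun a (_ : a ∈ (Finset.univ : Finset (Fin m))) =>
    Finset.sum_congr rfl (fun j (_ : j ∈ (Finset.univ : Finset (Fin J))) => hsplit a j))]
  simp only [Finset.sum_sub_distrib, Finset.sum_add_distrib]
  rw [hpiece (fun a => (Jc a : ℝ) / ((N : ℝ) * p a))
      (fun j => ∑ i, (Y j i true - Ybarj J N Y j true) ^ 2),
    hpiece (fun a => (Jc a : ℝ) / ((N : ℝ) * (1 - p a)))
      (fun j => ∑ i, (Y j i false - Ybarj J N Y j false) ^ 2),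
    hpiece (fun a => (Jc a : ℝ) / (N : ℝ))
      (fun j => ∑ i, ((Y j i true - Y j i false)
        - (Ybarj J N Y j true - Ybarj J N Y j false)) ^ 2)]
  have hcoef : (∑ a, (Jc a : ℝ) / (N : ℝ)) = (J : ℝ) / (N : ℝ) := by
    rw [← Finset.sum_div, hJsumR]
  rw [hcoef]
  rw [← Finset.sum_mul, ← Finset.sum_mul]
  ring
end
end
end
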